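/- arXiv:1407.5841 — 3 statements merged into one kernel-verified Lean document; each statement's English description precedes it below -/
import Mathlib

section
/- For j ≥ 2, the maximum length U_j of a factor of the infinite Tribonacci word having period T_j satisfies U_j = (5/2)T_j + T_{j-1} + (1/2)T_{j-2} - 3/2, i.e., 2U_j = 5T_j + 2T_{j-1} + T_{j-2} - 3. -/
/-- The Tribonacci morphism: 0 → 01, 1 → 02, 2 → 0. -/
def tribMap (c : ℕ) : List ℕ := if c = 0 then [0,1] else if c = 1 then [0,2] else [0]

/-- Iterates of the Tribonacci morphism on the word `0`. -/
def tribIter : ℕ → List ℕ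
  | 0 => [0]
  | k+1 => (tribIter k).flatMap tribMap

/-- The infinite Tribonacci word, the fixed point starting with 0 of 0→01, 1→02, 2→0. -/
def tribWord (n : ℕ) : ℕ := (tribIter (n+1)).getD n 0

/-- The Tribonacci numbers. -/
def trib : ℕ → ℕ
  | 0 => 0
  | 1 => 1
  | 2 => 1
  | n+3 => trib (n+2) + trib (n+1) + trib n

/-! ### Basic facts about tribIter -/

lemma tribMap_ne_nil (c : ℕ) : tribMap c ≠ [] := by
  unfold tribMap; split <;> [skip; split] <;> simp

lemma tribMap_head (c : ℕ) : (tribMap c).getD 0 0 = 0 := by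
  unfold tribMap; split <;> [skip; split] <;> simp

lemma flatMap_prefix {u v : List ℕ} (h : u <+: v) :
    u.flatMap tribMap <+: v.flatMap tribMap := by
  obtain ⟨t, rfl⟩ := h
  exact ⟨t.flatMap tribMap, by simp [List.flatMap_append]⟩

lemma tribIter_prefix_succ (k : ℕ) : tribIter k <+: tribIter (k+1) := by
  induction k with
  | zero => exact ⟨[1], by simp [tribIter, tribMap]⟩
  | succ k ih =>
      show tribIter (k+1) <+: (tribIter (k+1)).flatMap tribMap
      have := flatMap_prefix ih
      exact this

lemma tribIter_prefix {a b : ℕ} (h : a ≤ b) : tribIter a <+: tribIter b := by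
  induction b with
  | zero => simpa [Nat.le_zero.mp h]
  | succ b ih =>
      rcases Nat.lt_or_ge a (b+1) with h'|h'
      · exact (ih (Nat.lt_succ_iff.mp h')).trans (tribIter_prefix_succ b)
      · have : a = b+1 := le_antisymm h h'
        simp [this]

lemma tribIter_ne_nil (k : ℕ) : tribIter k ≠ [] := by
  induction k with
  | zero => simp [tribIter]
  | succ k ih =>
      show (tribIter k).flatMap tribMap ≠ []
      intro h
      rcases List.eq_nil_or_concat (tribIter k) with h'|⟨l, a, h'⟩
      · exact ih h'
      · rw [h'] at h
        simp [List.flatMap_append] at h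
        exact tribMap_ne_nil a h.2

lemma tribIter_head (k : ℕ) : (tribIter k).getD 0 0 = 0 := by
  induction k with
  | zero => simp [tribIter]
  | succ k ih =>
      show ((tribIter k).flatMap tribMap).getD 0 0 = 0
      rcases h : tribIter k with _|⟨a, l⟩
      · exact absurd h (tribIter_ne_nil k)
      · have ha : (tribMap a).getD 0 0 = 0 := tribMap_head a
        simp only [List.flatMap_cons]
        rcases hm : tribMap a with _|⟨b, m⟩
        · exact absurd hm (tribMap_ne_nil a)
        · simp at ha ⊢
          rw [hm] at ha; simpa using ha

lemma flatMap_length_ge : ∀ m : List ℕ, m.length ≤ (m.flatMap tribMap).length := by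
  intro m
  induction m with
  | nil => simp
  | cons b m ih =>
      simp only [List.flatMap_cons, List.length_append, List.length_cons]
      have hb : 1 ≤ (tribMap b).length := by
        rcases hm : tribMap b with _|_
        · exact absurd hm (tribMap_ne_nil b)
        · simp
      omega

lemma tribIter_length_lt (k : ℕ) : (tribIter k).length < (tribIter (k+1)).length := by
  have h0 : (tribIter k).getD 0 0 = 0 := tribIter_head k
  show (tribIter k).length < ((tribIter k).flatMap tribMap).length
  rcases h : tribIter k with _|⟨a, l⟩
  · exact absurd h (tribIter_ne_nil k)
  · rw [h] at h0; simp at h0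
    subst h0
    simp only [List.flatMap_cons, List.length_append, List.length_cons]
    have := flatMap_length_ge l
    have h2 : (tribMap 0).length = 2 := by simp [tribMap]
    omega

lemma tribIter_length_ge (k : ℕ) : k + 1 ≤ (tribIter k).length := by
  induction k with
  | zero => simp [tribIter]
  | succ k ih => have := tribIter_length_lt k; omega

lemma tribWord_eval {m n : ℕ} (h : n < (tribIter m).length) :
    tribWord n = (tribIter m).getD n 0 := by
  unfold tribWord
  rcases Nat.le_total m (n+1) with h'|h'
  · obtain ⟨t, ht⟩ := tribIter_prefix h'
    rw [← ht, List.getD_append _ _ _ _ h]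
  · obtain ⟨t, ht⟩ := tribIter_prefix h'
    have hn : n < (tribIter (n+1)).length := by
      have := tribIter_length_ge (n+1); omega
    rw [← ht, List.getD_append _ _ _ _ hn]
/-! ### Block structure: T = σ(T) positionally -/

def listBlen (w : List ℕ) : ℕ := (w.flatMap tribMap).length

def beta : ℕ → ℕ
  | 0 => 0
  | r+1 => beta r + (tribMap (tribWord r)).length

lemma tribMap_len_pos (c : ℕ) : 1 ≤ (tribMap c).length := by
  unfold tribMap; split <;> [simp; split <;> simp]

lemma tribMap_len_le (c : ℕ) : (tribMap c).length ≤ 2 := by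
  unfold tribMap; split <;> [simp; split <;> simp]

lemma flat_getD (w : List ℕ) : ∀ (r j : ℕ), r < w.length → j < (tribMap (w.getD r 0)).length →
    (w.flatMap tribMap).getD (listBlen (w.take r) + j) 0 = (tribMap (w.getD r 0)).getD j 0 := by
  induction w with
  | nil => intro r j h; simp at h
  | cons a w ih =>
      intro r j hr hj
      cases r with
      | zero =>
          simp only [List.take_zero, listBlen, List.flatMap_nil, List.length_nil, Nat.zero_add,
            List.flatMap_cons, List.getD_cons_zero] at *
          exact List.getD_append _ _ _ _ hj
      | succ r =>
          simp only [List.take_succ_cons, List.getD_cons_succ, List.flatMap_cons] at *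
          have hlb : listBlen (a :: w.take r) = (tribMap a).length + listBlen (w.take r) := by
            simp [listBlen, List.flatMap_cons]
          rw [hlb]
          have : (tribMap a).length + listBlen (w.take r) + j
              = (tribMap a).length + (listBlen (w.take r) + j) := by omega
          rw [this, List.getD_append_right _ _ _ _ (by omega), Nat.add_sub_cancel_left]
          exact ih r j (by simpa using hr) hj

lemma listBlen_take_succ {w : List ℕ} {r : ℕ} (h : r < w.length) :
    listBlen (w.take (r+1)) = listBlen (w.take r) + (tribMap (w.getD r 0)).length := by
  rw [List.take_succ]
  have : w[r]? = some (w.getD r 0) := by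
    rw [List.getD_eq_getElem _ _ h]
    exact List.getElem?_eq_getElem h
  rw [this]
  simp [listBlen, List.flatMap_append]

lemma beta_take {m : ℕ} : ∀ {r : ℕ}, r ≤ (tribIter m).length →
    listBlen ((tribIter m).take r) = beta r := by
  intro r
  induction r with
  | zero => intro _; simp [listBlen, beta]
  | succ r ih =>
      intro h
      have hr : r < (tribIter m).length := h
      rw [listBlen_take_succ hr, ih (le_of_lt hr), beta, tribWord_eval hr]

lemma listBlen_take_le (w : List ℕ) (r : ℕ) : listBlen (w.take r) ≤ listBlen w := by
  have : w.take r <+: w := List.take_prefix r w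
  obtain ⟨t, ht⟩ := flatMap_prefix this
  simp only [listBlen]
  rw [← ht]; simp

lemma master (r : ℕ) : ∀ {j : ℕ}, j < (tribMap (tribWord r)).length →
    tribWord (beta r + j) = (tribMap (tribWord r)).getD j 0 := by
  intro j hj
  set m := r + 1 with hm
  have hrlen : r < (tribIter m).length := by have := tribIter_length_ge m; omega
  have hw : tribWord r = (tribIter m).getD r 0 := tribWord_eval hrlen
  have hbt : listBlen ((tribIter m).take r) = beta r := beta_take (le_of_lt hrlen)
  have hlt : beta r + j < (tribIter (m+1)).length := by
    have h1 : listBlen ((tribIter m).take (r+1)) = listBlen ((tribIter m).take r) + (tribMap ((tribIter m).getD r 0)).length :=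
      listBlen_take_succ hrlen
    have h2 : listBlen ((tribIter m).take (r+1)) ≤ listBlen (tribIter m) := listBlen_take_le _ _
    have h3 : (tribIter (m+1)).length = listBlen (tribIter m) := by
      simp [listBlen, tribIter]
    rw [← hw] at h1
    omega
  rw [tribWord_eval hlt]
  have : (tribIter (m+1)) = (tribIter m).flatMap tribMap := rfl
  rw [this, ← hbt, hw]
  exact flat_getD _ r j hrlen (by rwa [← hw])

lemma beta_succ (r : ℕ) : beta (r+1) = beta r + (tribMap (tribWord r)).length := rfl

lemma beta_lt_succ (r : ℕ) : beta r < beta (r+1) := by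
  have := tribMap_len_pos (tribWord r); rw [beta_succ]; omega

lemma beta_strictMono : StrictMono beta := strictMono_nat_of_lt_succ beta_lt_succ

lemma tribWord_beta (r : ℕ) : tribWord (beta r) = 0 := by
  have h := master r (j := 0) (tribMap_len_pos _)
  rw [Nat.add_zero] at h
  rw [h, tribMap_head]

lemma tribWord_lt_three (n : ℕ) : tribWord n < 3 := by
  have hmem : ∀ m, ∀ c ∈ tribIter m, c < 3 := by
    intro m
    induction m with
    | zero => intro c hc; simp [tribIter] at hc; omega
    | succ m ih =>
        intro c hc
        simp only [tribIter, List.mem_flatMap] at hc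
        obtain ⟨a, _, hc⟩ := hc
        unfold tribMap at hc
        split at hc <;> [skip; split at hc] <;> simp at hc <;> omega
  have hn : n < (tribIter (n+1)).length := by have := tribIter_length_ge (n+1); omega
  rw [tribWord_eval hn, List.getD_eq_getElem _ _ hn]
  exact hmem _ _ (List.getElem_mem _)

lemma beta_cover (n : ℕ) : ∃ r, beta r ≤ n ∧ n < beta (r+1) := by
  induction n with
  | zero => exact ⟨0, by simp [beta], by have := beta_lt_succ 0; simp [beta] at this ⊢; omega⟩
  | succ n ih =>
      obtain ⟨r, h1, h2⟩ := ih
      rcases Nat.lt_or_ge (n+1) (beta (r+1)) with h|h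
      · exact ⟨r, by omega, h⟩
      · refine ⟨r+1, h, ?_⟩
        have h3 : beta (r+1) = n+1 := by omega
        have := beta_lt_succ (r+1)
        omega

lemma blen_two_cases {r : ℕ} (h : (tribMap (tribWord r)).length = 2) :
    tribWord r = 0 ∨ tribWord r = 1 := by
  have := tribWord_lt_three r
  interval_cases (tribWord r) <;> simp_all [tribMap]

lemma blen_one_two (r : ℕ) : (tribMap (tribWord r)).length = 1 ∨ (tribMap (tribWord r)).length = 2 := by
  have h1 := tribMap_len_pos (tribWord r)
  have h2 := tribMap_len_le (tribWord r)
  omega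

lemma second_letter {r : ℕ} (h : (tribMap (tribWord r)).length = 2) :
    tribWord (beta r + 1) = if tribWord r = 0 then 1 else 2 := by
  have hm := master r (j := 1) (by omega)
  rcases blen_two_cases h with h0|h1
  · rw [hm, h0]; simp [tribMap]
  · rw [hm, h1]; simp [tribMap]

lemma beta_exists {n : ℕ} (h : tribWord n = 0) : ∃ r, beta r = n := by
  obtain ⟨r, h1, h2⟩ := beta_cover n
  rcases Nat.eq_or_lt_of_le h1 with he|hl
  · exact ⟨r, he⟩
  · exfalso
    have hb := beta_succ r
    have hlen := blen_one_two r
    have hn : n = beta r + 1 := by omega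
    have h2' : (tribMap (tribWord r)).length = 2 := by omega
    have := second_letter h2'
    rw [← hn] at this
    split at this <;> omega

lemma P1 {n : ℕ} (h : tribWord n ≠ 0) : tribWord (n+1) = 0 := by
  obtain ⟨r, h1, h2⟩ := beta_cover n
  rcases Nat.eq_or_lt_of_le h1 with he|hl
  · rw [← he] at h; exact absurd (tribWord_beta r) h
  · have hb := beta_succ r
    have hlen := blen_one_two r
    have hn : n = beta r + 1 := by omega
    have : n + 1 = beta (r+1) := by omega
    rw [this]; exact tribWord_beta _
lemma P1' {n : ℕ} (h : tribWord (n+1) ≠ 0) : tribWord n = 0 := by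
  obtain ⟨r, h1, h2⟩ := beta_cover (n+1)
  rcases Nat.eq_or_lt_of_le h1 with he|hl
  · rw [← he] at h; exact absurd (tribWord_beta r) h
  · have hb := beta_succ r
    have hlen := blen_one_two r
    have hn : n = beta r := by omega
    rw [hn]; exact tribWord_beta _

lemma beta_eq_inj {r s : ℕ} (h : beta r = beta s) : r = s :=
  beta_strictMono.injective h

lemma blen_one {r : ℕ} (h : (tribMap (tribWord r)).length = 1) : tribWord r = 2 := by
  have h3 := tribWord_lt_three r
  by_contra hne
  have : tribWord r = 0 ∨ tribWord r = 1 := by omega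
  rcases this with h0|h1
  · rw [h0] at h; simp [tribMap] at h
  · rw [h1] at h; simp [tribMap] at h

lemma P2 {n : ℕ} (h0 : tribWord n = 0) (h1 : tribWord (n+1) = 0) (h2 : tribWord (n+2) = 0) :
    False := by
  obtain ⟨r, hr⟩ := beta_exists h0
  obtain ⟨s, hs⟩ := beta_exists h1
  obtain ⟨t, ht⟩ := beta_exists h2
  have hsr : s = r + 1 := by
    by_contra hne
    rcases Nat.lt_or_ge s (r+1) with hc|hc
    · have : beta s ≤ beta r := beta_strictMono.monotone (by omega)
      omega
    · have h3 : r + 1 < s := by omega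
      have : beta (r+1) < beta s := beta_strictMono h3
      have h4 := beta_succ r
      have h5 := tribMap_len_le (tribWord r)
      have h6 := tribMap_len_pos (tribWord r)
      omega
  have hts : t = s + 1 := by
    by_contra hne
    rcases Nat.lt_or_ge t (s+1) with hc|hc
    · have : beta t ≤ beta s := beta_strictMono.monotone (by omega)
      omega
    · have h3 : s + 1 < t := by omega
      have : beta (s+1) < beta t := beta_strictMono h3
      have h4 := beta_succ s
      have h5 := tribMap_len_le (tribWord s)
      have h6 := tribMap_len_pos (tribWord s)
      omega
  -- blocks of length 1 ⇒ letters 2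
  have hr2 : tribWord r = 2 := by
    have h4 := beta_succ r
    apply blen_one
    rw [hsr] at hs; omega
  have hs2 : tribWord s = 2 := by
    have h4 := beta_succ s
    apply blen_one
    rw [hts] at ht; omega
  have := P1 (n := r) (by omega)
  rw [← hsr] at this
  omega

def dec (d : ℕ) : ℕ := if d = 1 then 0 else if d = 2 then 1 else 2

lemma decode_eq (r : ℕ) : tribWord r = dec (tribWord (beta r + 1)) := by
  have h3 := tribWord_lt_three r
  have hlen := blen_one_two r
  rcases hlen with h|h
  · -- length 1: letter 2, next position is next block start
    have hr2 : tribWord r = 2 := blen_one h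
    have : beta (r+1) = beta r + 1 := by rw [beta_succ, h]
    rw [hr2, ← this, tribWord_beta]
    simp [dec]
  · have := second_letter h
    rcases blen_two_cases h with h0|h1
    · rw [h0] at this ⊢; simp at this; rw [this]; simp [dec]
    · rw [h1] at this ⊢; simp at this; rw [this]; simp [dec]

lemma P3 {n : ℕ} (h : tribWord n = 2) : tribWord (n+1) = 0 ∧ tribWord (n+2) = 1 := by
  obtain ⟨r, h1, h2⟩ := beta_cover n
  rcases Nat.eq_or_lt_of_le h1 with he|hl
  · exfalso; rw [← he] at h; have := tribWord_beta r; omega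
  · have hb := beta_succ r
    have hlen := blen_one_two r
    have hn : n = beta r + 1 := by omega
    have h2' : (tribMap (tribWord r)).length = 2 := by omega
    have hsl := second_letter h2'
    rw [← hn] at hsl
    have hr1 : tribWord r = 1 := by
      rcases blen_two_cases h2' with h0|h1
      · rw [h0] at hsl; simp at hsl; omega
      · exact h1
    have hn1 : n + 1 = beta (r+1) := by omega
    constructor
    · rw [hn1]; exact tribWord_beta _
    · have hP1 : tribWord (r+1) = 0 := P1 (by omega)
      have h2'' : (tribMap (tribWord (r+1))).length = 2 := by rw [hP1]; simp [tribMap]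
      have hv := second_letter h2''
      rw [hP1] at hv; simp at hv
      rw [show n+2 = beta (r+1) + 1 by omega]
      exact hv
/-! ### Counting and stretches -/

def cnt (l i : ℕ) : ℕ → ℕ
  | 0 => 0
  | t+1 => cnt l i t + (if tribWord (i+t) = l then 1 else 0)

def StretchP (i n q : ℕ) : Prop := ∀ k, k + q < n → tribWord (i+k) = tribWord (i+k+q)

lemma stretch_mono {i n q n' : ℕ} (h : StretchP i n q) (h' : n' ≤ n) : StretchP i n' q :=
  fun k hk => h k (by omega)

lemma cnt_add (l i a b : ℕ) : cnt l i (a+b) = cnt l i a + cnt l (i+a) b := by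
  induction b with
  | zero => simp [cnt]
  | succ b ih =>
      show cnt l i (a+b+1) = _
      rw [cnt, ih, cnt]
      have : i + a + b = i + (a + b) := by omega
      rw [this]
      omega

lemma cnt_one (l j : ℕ) : cnt l j 1 = if tribWord j = l then 1 else 0 := by
  simp [cnt]

lemma cnt_le (l i t : ℕ) : cnt l i t ≤ t := by
  induction t with
  | zero => simp [cnt]
  | succ t ih => rw [cnt]; split <;> omega

lemma cnt_mono_t {l i t t' : ℕ} (h : t ≤ t') : cnt l i t ≤ cnt l i t' := by
  have : t' = t + (t' - t) := by omega
  rw [this, cnt_add]; omega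

lemma cnt_contain {l i t i' t' : ℕ} (h1 : i' ≤ i) (h2 : i + t ≤ i' + t') :
    cnt l i t ≤ cnt l i' t' := by
  have e : t' = (i - i') + (t + (i' + t' - i - t)) := by omega
  rw [e, cnt_add, cnt_add]
  have : i' + (i - i') = i := by omega
  rw [this]
  omega

lemma cnt_shift {i n q : ℕ} (hs : StretchP i n q) (l : ℕ) :
    ∀ a t, a + t + q ≤ n → cnt l (i+a+q) t = cnt l (i+a) t := by
  intro a t
  induction t with
  | zero => intro _; simp [cnt]
  | succ t ih =>
      intro h
      rw [cnt, cnt, ih (by omega)]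
      have he : tribWord (i + (a+t)) = tribWord (i + (a+t) + q) := hs (a+t) (by omega)
      have e1 : i + a + q + t = i + (a+t) + q := by omega
      have e2 : i + a + t = i + (a+t) := by omega
      rw [e1, e2, he]

lemma window_slide {i n q : ℕ} (hs : StretchP i n q) (l : ℕ) :
    ∀ d, d + q ≤ n → cnt l (i+d) q = cnt l i q := by
  intro d
  induction d with
  | zero => intro _; simp
  | succ d ih =>
      intro h
      have e1 : cnt l (i+d) (q+1) = cnt l (i+d) q + cnt l (i+d+q) 1 := cnt_add _ _ _ _
      have e1' : cnt l (i+d) (q+1) = cnt l (i+d) 1 + cnt l (i+d+1) q := by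
        rw [show q+1 = 1+q by omega]; exact cnt_add _ _ _ _
      have e3 : tribWord (i+d) = tribWord (i+d+q) := hs d (by omega)
      have e4 : cnt l (i+d) 1 = cnt l (i+d+q) 1 := by rw [cnt_one, cnt_one, e3]
      have e5 := ih (by omega)
      have e6 : i + (d+1) = i + d + 1 := by omega
      rw [e6]
      omega

lemma cnt0_pair (j : ℕ) : 1 ≤ cnt 0 j 2 := by
  show 1 ≤ cnt 0 j 1 + _
  rw [cnt_one]
  by_cases h : tribWord j = 0
  · simp [h]
  · have := P1 h
    simp [this, h]

lemma cnt0_even (j : ℕ) : ∀ m, m ≤ cnt 0 j (2*m) := by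
  intro m
  induction m generalizing j with
  | zero => simp
  | succ m ih =>
      have e : 2*(m+1) = 2 + 2*m := by omega
      rw [e, cnt_add]
      have := ih (j+2)
      have := cnt0_pair j
      omega

lemma cnt0_half (j t : ℕ) : t / 2 ≤ cnt 0 j t := by
  have e : t = 2 * (t/2) + t % 2 := by omega
  calc t/2 ≤ cnt 0 j (2*(t/2)) := cnt0_even j _
    _ ≤ cnt 0 j t := cnt_mono_t (by omega)

lemma cnt0_aligned {i : ℕ} (h : tribWord i = 0) (t : ℕ) : (t+1) / 2 ≤ cnt 0 i t := by
  cases t with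
  | zero => simp
  | succ t =>
      have e : t + 1 = 1 + t := by omega
      rw [e, cnt_add, cnt_one, h]
      simp
      have := cnt0_half (i+1) t
      omega

/-! ### Block counting -/

lemma blen_split (u : ℕ) : (tribMap (tribWord u)).length
    = 1 + (if tribWord u = 0 then 1 else 0) + (if tribWord u = 1 then 1 else 0) := by
  have h := tribWord_lt_three u
  interval_cases h' : (tribWord u) <;> simp [tribMap]

lemma cnt_block0 (u : ℕ) : cnt 0 (beta u) (tribMap (tribWord u)).length = 1 := by
  rcases blen_one_two u with h|h
  · rw [h, cnt_one, tribWord_beta]; simp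
  · rw [h]
    show cnt 0 (beta u) 1 + _ = 1
    rw [cnt_one, tribWord_beta]
    have := second_letter h
    have : tribWord (beta u + 1) ≠ 0 := by split at this <;> omega
    simp [this]

lemma cnt_block1 (u : ℕ) : cnt 1 (beta u) (tribMap (tribWord u)).length
    = if tribWord u = 0 then 1 else 0 := by
  rcases blen_one_two u with h|h
  · have h2 := blen_one h
    rw [h, cnt_one, tribWord_beta]
    simp [h2]
  · rw [h]
    show cnt 1 (beta u) 1 + _ = _
    rw [cnt_one, tribWord_beta]
    have hsl := second_letter h
    rcases blen_two_cases h with h0|h1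
    · rw [h0] at hsl ⊢; simp at hsl; simp [hsl]
    · rw [h1] at hsl ⊢; simp at hsl; simp [hsl]

lemma beta_add_diff {r k : ℕ} : beta r + (beta (r+k) - beta r) = beta (r+k) := by
  have : beta r ≤ beta (r+k) := beta_strictMono.monotone (by omega)
  omega

lemma cnt_blocks0 (r : ℕ) : ∀ k, cnt 0 (beta r) (beta (r+k) - beta r) = k := by
  intro k
  induction k with
  | zero => simp [cnt]
  | succ k ih =>
      have e1 : beta (r+(k+1)) = beta (r+k) + (tribMap (tribWord (r+k))).length := beta_succ _
      have e2 : beta r ≤ beta (r+k) := beta_strictMono.monotone (by omega)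
      have e3 : beta (r+(k+1)) - beta r
          = (beta (r+k) - beta r) + (tribMap (tribWord (r+k))).length := by omega
      rw [e3, cnt_add, ih, beta_add_diff, cnt_block0]

lemma cnt_blocks1 (r : ℕ) : ∀ k, cnt 1 (beta r) (beta (r+k) - beta r) = cnt 0 r k := by
  intro k
  induction k with
  | zero => simp [cnt]
  | succ k ih =>
      have e1 : beta (r+(k+1)) = beta (r+k) + (tribMap (tribWord (r+k))).length := beta_succ _
      have e2 : beta r ≤ beta (r+k) := beta_strictMono.monotone (by omega)
      have e3 : beta (r+(k+1)) - beta r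
          = (beta (r+k) - beta r) + (tribMap (tribWord (r+k))).length := by omega
      rw [e3, cnt_add, ih, beta_add_diff, cnt_block1]
      rfl

lemma sumblen (r : ℕ) : ∀ k, beta (r+k) = beta r + k + cnt 0 r k + cnt 1 r k := by
  intro k
  induction k with
  | zero => simp [cnt]
  | succ k ih =>
      have e1 : beta (r+(k+1)) = beta (r+k) + (tribMap (tribWord (r+k))).length := beta_succ _
      rw [e1, ih, blen_split (r+k)]
      show _ = _ + (cnt 0 r k + _) + (cnt 1 r k + _)
      omega

lemma locate {r i t : ℕ} (hr : beta r = i) (h : tribWord (i+t) = 0) :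
    beta (r + cnt 0 i t) = i + t := by
  obtain ⟨s, hs⟩ := beta_exists h
  have hrs : r ≤ s := by
    have : beta r ≤ beta s := by omega
    exact beta_strictMono.le_iff_le.mp this
  have e : cnt 0 i t = s - r := by
    have : t = beta (r + (s-r)) - beta r := by
      rw [show r + (s-r) = s by omega]; omega
    rw [← hr, this, cnt_blocks0]
  rw [e, show r + (s-r) = s by omega, hs]

/-! ### Left alignment extension -/

lemma stretch_extend {q : ℕ} : ∀ i {n : ℕ}, StretchP i n q → q + 1 ≤ n →
    ∃ i' n', i' ≤ i ∧ i' + n' = i + n ∧ StretchP i' n' q ∧ tribWord i' = 0 := by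
  intro i
  induction i using Nat.strong_induction_on with
  | _ i ih =>
      intro n hs hn
      by_cases h0 : tribWord i = 0
      · exact ⟨i, n, le_refl _, rfl, hs, h0⟩
      · have hi : i ≠ 0 := by
          intro h; rw [h] at h0
          have : tribWord 0 = 0 := by rw [show (0:ℕ) = beta 0 from rfl]; exact tribWord_beta 0
          exact h0 this
        obtain ⟨j, hj⟩ : ∃ j, i = j + 1 := ⟨i - 1, by omega⟩
        subst hj
        have hprev : tribWord j = 0 := P1' h0
        have hq : tribWord (j + 1 + q) ≠ 0 := by
          rw [← hs 0 (by omega)]; simpa using h0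
        have hqprev : tribWord (j + q) = 0 := by
          have := P1' (n := j + q) (by rw [show j+q+1 = j+1+q by omega]; exact hq)
          exact this
        have hs' : StretchP j (n+1) q := by
          intro k hk
          cases k with
          | zero =>
              simp only [Nat.add_zero]
              rw [hprev, hqprev]
          | succ k =>
              have e2 : tribWord (j+1+k) = tribWord (j+1+k+q) := hs k (by omega)
              convert e2 using 2 <;> omega
        obtain ⟨i', n', h1, h2, h3, h4⟩ := ih j (by omega) hs' (by omega)
        exact ⟨i', n', by omega, by omega, h3, h4⟩
/-! ### The descent package -/

theorem package {i n q : ℕ} (hq : 1 ≤ q) (hn : q + 1 ≤ n) (ha : tribWord i = 0)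
    (hs : StretchP i n q) :
    ∃ r₀ ν, beta r₀ = i ∧
      StretchP r₀ ν (cnt 0 i q) ∧
      cnt 0 i q ≤ ν ∧
      cnt 0 i (n-1) ≤ ν ∧
      q = cnt 0 i q + cnt 0 r₀ (cnt 0 i q) + cnt 1 r₀ (cnt 0 i q) ∧
      cnt 1 i q = cnt 0 r₀ (cnt 0 i q) ∧
      n ≤ ν + cnt 0 r₀ ν + cnt 1 r₀ ν + 1 ∧
      cnt 0 i n ≤ ν + 1 ∧
      cnt 1 i n = cnt 0 r₀ ν := by
  obtain ⟨r₀, hr₀⟩ := beta_exists ha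
  set q₂ := cnt 0 i q with hq₂def
  obtain ⟨r₁, hc1, hc2⟩ := beta_cover (i + n)
  have hr01 : r₀ ≤ r₁ := by
    by_contra hcon
    have h1 : r₁ + 1 ≤ r₀ := by omega
    have := beta_strictMono.monotone h1
    omega
  set B := r₁ - r₀ with hBdef
  have hr₁B : r₁ = r₀ + B := by omega
  set e' := beta r₁ with he'def
  -- e' ≥ i + n - 1
  have hnz : ∀ p, e' < p → p ≤ i + n → tribWord p ≠ 0 := by
    intro p h1 h2 h3
    obtain ⟨s, hsp⟩ := beta_exists h3
    have hs1 : r₁ < s := by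
      by_contra hcon
      have : beta s ≤ beta r₁ := beta_strictMono.monotone (by omega)
      omega
    have : beta (r₁+1) ≤ beta s := beta_strictMono.monotone (by omega)
    omega
  have he'3 : i + n ≤ e' + 1 := by
    by_contra hcon
    have h1 : tribWord (i+n-1) ≠ 0 := hnz _ (by omega) (by omega)
    have h2 : tribWord (i+n) = 0 := by
      have := P1 (n := i+n-1) h1
      rwa [show i+n-1+1 = i+n by omega] at this
    exact hnz _ (by omega) (by omega) h2
  -- locate window end
  have hTiq : tribWord (i + q) = 0 := by
    have := hs 0 (by omega)
    simp at this
    rw [← this]; exact ha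
  have hloc : beta (r₀ + q₂) = i + q := locate hr₀ hTiq
  have he'q : i + q ≤ e' := by omega
  have hB0 : cnt 0 i (e' - i) = B := by
    have := cnt_blocks0 r₀ B
    rw [hr₀, ← hr₁B] at this
    exact this
  have hB1 : cnt 1 i (e' - i) = cnt 0 r₀ B := by
    have := cnt_blocks1 r₀ B
    rw [hr₀, ← hr₁B] at this
    exact this
  have hie' : i ≤ e' := by rw [← hr₀, he'def]; exact beta_strictMono.monotone hr01
  have hq2B : q₂ ≤ B := by
    rw [← hB0, hq₂def]
    exact cnt_mono_t (by omega)
  have hq2pos : 1 ≤ q₂ := by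
    rw [hq₂def]
    calc 1 = cnt 0 i 1 := by rw [cnt_one]; simp [ha]
      _ ≤ cnt 0 i q := cnt_mono_t hq
  have hBpos : 1 ≤ B := le_trans hq2pos hq2B
  -- position lemmas
  have posA : ∀ m, m + 1 ≤ B → beta (r₀+m) + (tribMap (tribWord (r₀+m))).length ≤ e' := by
    intro m hm
    have : beta (r₀+m+1) ≤ beta r₁ := beta_strictMono.monotone (by omega)
    rw [beta_succ] at this
    exact this
  have posB : ∀ m, m + 2 ≤ B → beta (r₀+m) + 1 < e' := by
    intro m hm
    have h1 : beta (r₀+m+1) + 1 ≤ e' := by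
      have := posA (m+1) (by omega)
      have hp := tribMap_len_pos (tribWord (r₀+(m+1)))
      rw [show r₀+(m+1) = r₀+m+1 by omega] at *
      omega
    have h2 : beta (r₀+m) < beta (r₀+m+1) := beta_lt_succ _
    omega
  have posC : ∀ m, m + 1 ≤ B → (tribMap (tribWord (r₀+m))).length = 2 → beta (r₀+m) + 1 < e' := by
    intro m hm hl
    have := posA m hm
    omega
  -- generic CORE and KEY parameterized by a bound ν with the needed position property
  have main : ∀ ν, ν ≤ B → q₂ ≤ ν →
      (∀ m, m + 1 ≤ ν → beta (r₀+m) + 1 < i + n) →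
      (∀ s, s + q₂ ≤ ν → beta (r₀+s+q₂) = beta (r₀+s) + q) ∧
      (∀ s, s + 1 + q₂ ≤ ν → tribWord (r₀+s) = tribWord (r₀+s+q₂)) := by
    intro ν hνB hq2ν hpos
    have CORE : ∀ s, s + 1 + q₂ ≤ ν → beta (r₀+s+q₂) = beta (r₀+s) + q →
        tribWord (r₀+s) = tribWord (r₀+s+q₂) := by
      intro s hsb hkey
      have hb1 : beta (r₀+s+q₂) + 1 < i + n := by
        have := hpos (s+q₂) (by omega)
        rwa [show r₀ + (s+q₂) = r₀+s+q₂ by omega] at this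
      have hge : i ≤ beta (r₀+s) := by
        rw [← hr₀]; exact beta_strictMono.monotone (by omega)
      have hper : tribWord (beta (r₀+s)+1) = tribWord (beta (r₀+s)+1+q) := by
        have := hs (beta (r₀+s)+1-i) (by omega)
        rw [show i + (beta (r₀+s)+1-i) = beta (r₀+s)+1 by omega] at this
        exact this
      have d1 := decode_eq (r₀+s)
      have d2 := decode_eq (r₀+s+q₂)
      rw [d1, d2, hper, hkey]
      rw [show beta (r₀+s) + 1 + q = beta (r₀+s) + q + 1 by omega]
    have KEY : ∀ s, s + q₂ ≤ ν → beta (r₀+s+q₂) = beta (r₀+s) + q := by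
      intro s
      induction s with
      | zero =>
          intro _
          rw [show r₀ + 0 + q₂ = r₀ + q₂ by omega, hloc]
          rw [show r₀ + 0 = r₀ by omega, hr₀]
      | succ s ihs =>
          intro hsb
          have hk := ihs (by omega)
          have hlet := CORE s (by omega) hk
          have e1 : beta (r₀+(s+1)+q₂) = beta (r₀+s+q₂) + (tribMap (tribWord (r₀+s+q₂))).length := by
            rw [show r₀+(s+1)+q₂ = (r₀+s+q₂)+1 by omega, beta_succ]
          have e2 : beta (r₀+(s+1)) = beta (r₀+s) + (tribMap (tribWord (r₀+s))).length := by
            rw [show r₀+(s+1) = (r₀+s)+1 by omega, beta_succ]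
          rw [e1, e2, hk, ← hlet]
          omega
    exact ⟨KEY, fun s hsb => CORE s hsb (KEY s (by omega))⟩
  -- case split on edge
  by_cases hedge : e' = i + n ∧ tribWord (r₀ + (B-1)) = 2
  · -- edge case : ν = B - 1
    obtain ⟨hee, hlast⟩ := hedge
    refine ⟨r₀, B - 1, hr₀, ?_⟩
    have hq2ν : q₂ ≤ B - 1 := by
      have h1 : cnt 0 i n = B := by
        rw [← hB0]; congr 1; omega
      have h2 : q₂ + 1 ≤ cnt 0 i n := by
        have e : cnt 0 i (q+1) = cnt 0 i q + 1 := by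
          show cnt 0 i q + _ = _
          simp [hTiq]
        have h3 : cnt 0 i (q+1) ≤ cnt 0 i n := cnt_mono_t hn
        omega
      omega
    have hpos : ∀ m, m + 1 ≤ B - 1 → beta (r₀+m) + 1 < i + n := by
      intro m hm
      have := posB m (by omega)
      omega
    obtain ⟨KEY, LE⟩ := main (B-1) (by omega) hq2ν hpos
    have hstretch : StretchP r₀ (B-1) q₂ := by
      intro k hk
      exact LE k (by omega)
    -- the last letter is 2 : counts over B vs B-1
    have hcnt0B : cnt 0 r₀ B = cnt 0 r₀ (B-1) := by
      have : B = (B-1) + 1 := by omega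
      rw [this]
      show cnt 0 r₀ (B-1) + _ = _
      rw [hlast]; simp
    have hcnt1B : cnt 1 r₀ B = cnt 1 r₀ (B-1) := by
      have : B = (B-1) + 1 := by omega
      rw [this]
      show cnt 1 r₀ (B-1) + _ = _
      rw [hlast]; simp
    have hsum : e' = i + B + cnt 0 r₀ B + cnt 1 r₀ B := by
      have := sumblen r₀ B
      rw [hr₀, ← hr₁B] at this
      exact this
    have hq_id : q = q₂ + cnt 0 r₀ q₂ + cnt 1 r₀ q₂ := by
      have := sumblen r₀ q₂
      rw [hr₀, hloc] at this
      omega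
    have ho_id : cnt 1 i q = cnt 0 r₀ q₂ := by
      have := cnt_blocks1 r₀ q₂
      rw [hr₀, hloc, show i + q - i = q by omega] at this
      exact this
    refine ⟨hstretch, hq2ν, ?_, hq_id, ho_id, ?_, ?_, ?_⟩
    · -- cnt 0 i (n-1) ≤ B - 1
      have hTlast : tribWord (i+n-1) = 0 := by
        have h1 : beta (r₁ - 1) = e' - (tribMap (tribWord (r₁-1))).length := by
          have := beta_succ (r₁-1)
          rw [show r₁-1+1 = r₁ by omega] at this
          have hp := tribMap_len_pos (tribWord (r₁-1))
          omega
        have h2 : (tribMap (tribWord (r₁-1))).length = 1 := by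
          rw [show r₁ - 1 = r₀ + (B-1) by omega, hlast]
          simp [tribMap]
        have h3 : beta (r₁-1) = i+n-1 := by omega
        rw [← h3]; exact tribWord_beta _
      have h4 : cnt 0 i n = cnt 0 i (n-1) + 1 := by
        have : n = (n-1) + 1 := by omega
        rw [this]
        show cnt 0 i (n-1) + _ = _
        rw [show i + (n-1) = i+n-1 by omega, hTlast]
        simp
      have h5 : cnt 0 i n = B := by rw [← hB0]; congr 1; omega
      omega
    · -- n ≤ ν + counts + 1
      omega
    · -- cnt 0 i n ≤ ν + 1
      have h5 : cnt 0 i n = B := by rw [← hB0]; congr 1; omega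
      omega
    · -- cnt 1 i n = cnt 0 r₀ ν
      have h5 : cnt 1 i n = cnt 0 r₀ B := by rw [← hB1]; congr 1; omega
      omega
  · -- non-edge : ν = B
    refine ⟨r₀, B, hr₀, ?_⟩
    have hpos : ∀ m, m + 1 ≤ B → beta (r₀+m) + 1 < i + n := by
      intro m hm
      rcases Nat.lt_or_ge (m+2) (B+1) with h|h
      · have := posB m (by omega); omega
      · have hmB : m = B - 1 := by omega
        rcases Nat.lt_or_ge e' (i+n) with h'|h'
        · have := posA m (by omega)
          have := tribMap_len_pos (tribWord (r₀+m))
          omega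
        · have hee : e' = i + n := by omega
          have hne2 : tribWord (r₀ + (B-1)) ≠ 2 := fun hcon => hedge ⟨hee, hcon⟩
          have hlen2 : (tribMap (tribWord (r₀+m))).length = 2 := by
            rcases blen_one_two (r₀+m) with h1|h1
            · exfalso; apply hne2; rw [← hmB]; exact blen_one h1
            · exact h1
          have := posC m (by omega) hlen2
          omega
    obtain ⟨KEY, LE⟩ := main B (le_refl _) hq2B hpos
    have hstretch : StretchP r₀ B q₂ := by
      intro k hk
      exact LE k (by omega)
    have hsum : e' = i + B + cnt 0 r₀ B + cnt 1 r₀ B := by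
      have := sumblen r₀ B
      rw [hr₀, ← hr₁B] at this
      exact this
    have hq_id : q = q₂ + cnt 0 r₀ q₂ + cnt 1 r₀ q₂ := by
      have := sumblen r₀ q₂
      rw [hr₀, hloc] at this
      omega
    have ho_id : cnt 1 i q = cnt 0 r₀ q₂ := by
      have := cnt_blocks1 r₀ q₂
      rw [hr₀, hloc, show i + q - i = q by omega] at this
      exact this
    refine ⟨hstretch, hq2B, ?_, hq_id, ho_id, ?_, ?_, ?_⟩
    · -- cnt 0 i (n-1) ≤ B
      rw [← hB0]
      exact cnt_mono_t (by omega)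
    · omega
    · -- cnt 0 i n ≤ B + 1
      have h1 : cnt 0 i n = cnt 0 i (e'-i) + cnt 0 e' (n - (e'-i)) := by
        have e : n = (e'-i) + (n - (e'-i)) := by omega
        rw [e, cnt_add, show i + (e'-i) = e' by omega, ← e]
      have h2 : cnt 0 e' (n - (e'-i)) ≤ 1 := le_trans (cnt_le _ _ _) (by omega)
      omega
    · -- cnt 1 i n = cnt 0 r₀ B
      have h1 : cnt 1 i n = cnt 1 i (e'-i) + cnt 1 e' (n - (e'-i)) := by
        have e : n = (e'-i) + (n - (e'-i)) := by omega
        rw [e, cnt_add, show i + (e'-i) = e' by omega, ← e]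
      have h2 : cnt 1 e' (n - (e'-i)) = 0 := by
        have hT : tribWord e' = 0 := tribWord_beta r₁
        rcases Nat.lt_or_ge (n - (e'-i)) 1 with h|h
        · have : n - (e'-i) = 0 := by omega
          rw [this]; rfl
        · have hone : n - (e'-i) = 1 := by omega
          rw [hone, cnt_one, hT]; simp
      omega
/-! ### Theorem A : 2n + 3 ≤ 5q + 2z + o -/

lemma cnt_pos {l j p t : ℕ} (hp : p < t) (hT : tribWord (j+p) = l) : 1 ≤ cnt l j t := by
  have h1 : cnt l j (p+1) ≤ cnt l j t := cnt_mono_t (by omega)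
  have e : cnt l j (p+1) = cnt l j p + (if tribWord (j+p) = l then 1 else 0) := rfl
  rw [hT] at e
  simp at e
  omega

lemma no_aaa {j : ℕ} (h1 : tribWord j = tribWord (j+1)) (h2 : tribWord (j+1) = tribWord (j+2)) :
    False := by
  by_cases h : tribWord j = 0
  · exact P2 h (by omega) (by omega)
  · have := P1 h; omega

lemma cnt01_one (j : ℕ) : cnt 0 j 1 + cnt 1 j 1 ≤ 1 := by
  rw [cnt_one, cnt_one]
  split <;> split <;> omega

lemma no_stretch3 {i n : ℕ} (hs : StretchP i n 1) (h : 3 ≤ n) : False := by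
  have a0 := hs 0 (by omega)
  have a1 := hs 1 (by omega)
  rw [show i+0 = i by omega, show i+0+1 = i+1 by omega] at a0
  rw [show i+1+1 = i+2 by omega] at a1
  exact no_aaa a0 a1

theorem thmA : ∀ q i n, 1 ≤ q → StretchP i n q →
    2*n + 3 ≤ 5*q + 2 * cnt 0 i q + cnt 1 i q := by
  intro q
  induction q using Nat.strong_induction_on with
  | _ q IH =>
  intro i n hq hs
  rcases Nat.lt_or_ge n (q+1) with hn|hn
  · -- trivial short case
    have := cnt0_half i q
    omega
  -- reduce to aligned
  obtain ⟨i', n', hle, hsum, hs', ha'⟩ := stretch_extend i hs hn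
  have hslide : ∀ l, cnt l i q = cnt l i' q := by
    intro l
    have := window_slide hs' l (i - i') (by omega)
    rw [show i' + (i - i') = i by omega] at this
    exact this
  rw [hslide 0, hslide 1]
  have hn' : n ≤ n' := by omega
  suffices h : 2*n' + 3 ≤ 5*q + 2 * cnt 0 i' q + cnt 1 i' q by omega
  clear hslide hs hn hsum hle hn'
  -- now aligned stretch (i', n', q)
  rcases Nat.lt_or_ge n' (2*q+2) with hsmall|hbig
  · -- n' ≤ 2q+1
    have hz := cnt0_aligned ha' q
    rcases Nat.lt_or_ge q 5 with hq5|hq5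
    · interval_cases q
      · -- q = 1 : n' ≤ 3, and n' = 3 impossible
        have hn3 : n' ≤ 2 := by
          by_contra hcon
          exact no_stretch3 hs' (by omega)
        have hz1 : cnt 0 i' 1 = 1 := by rw [cnt_one, ha']; simp
        omega
      · -- q = 2 : n' ≤ 5
        have hz1 : 1 ≤ cnt 0 i' 2 := by
          apply cnt_pos (p := 0) (by omega); simpa using ha'
        rcases Nat.lt_or_ge n' 5 with h5|h5
        · omega
        · have hn5 : n' = 5 := by omega
          -- window is "01"
          have hb : tribWord (i'+1) = 1 := by
            have h3 := tribWord_lt_three (i'+1)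
            by_contra hb1
            by_cases hb0 : tribWord (i'+1) = 0
            · refine P2 ha' hb0 ?_
              have h := hs' 0 (by omega)
              rw [show i'+0 = i' by omega, show i'+0+2 = i'+2 by omega] at h
              omega
            · have hb2 : tribWord (i'+1) = 2 := by omega
              have h13 : tribWord (i'+3) = 2 := by
                have := hs' 1 (by omega); rw [← this]; exact hb2
              have := (P3 hb2).2
              rw [show i'+1+2 = i'+3 by omega] at this
              omega
          have ho1 : 1 ≤ cnt 1 i' 2 := by
            apply cnt_pos (p := 1) (by omega); exact hb
          omega
      · -- q = 3
        omega
      · -- q = 4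
        omega
    · omega
  · -- main descent case, n' ≥ 2q + 2
    rcases Nat.lt_or_ge q 3 with hq3|hq3
    · interval_cases q
      · -- q = 1 impossible
        exact (no_stretch3 hs' (by omega)).elim
      · -- q = 2 : kill via descent to period-1
        exfalso
        obtain ⟨r₀, ν, hbr, hst, hwin, hnulb, hqid, hoid, hlen, hc0, hc1⟩ :=
          package (by omega) (by omega) ha' hs'
        have hT1 : tribWord (i'+1) ≠ 0 := by
          intro hb0
          refine P2 ha' hb0 ?_
          have h := hs' 0 (by omega)
          rw [show i'+0 = i' by omega, show i'+0+2 = i'+2 by omega] at h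
          omega
        have hq2 : cnt 0 i' 2 = 1 := by
          show cnt 0 i' 1 + _ = 1
          rw [cnt_one, ha']
          simp [hT1]
        have hν : 3 ≤ ν := by
          have h1 : cnt 0 i' 5 ≤ cnt 0 i' (n'-1) := cnt_mono_t (by omega)
          have hTi2 : tribWord (i'+2) = 0 := by
            have h := hs' 0 (by omega)
            rw [show i'+0 = i' by omega, show i'+0+2 = i'+2 by omega] at h
            omega
          have hTi4 : tribWord (i'+4) = 0 := by
            have h := hs' 2 (by omega)
            rw [show i'+2+2 = i'+4 by omega] at h
            omega
          have u1 : cnt 0 i' 5 = cnt 0 i' 4 + (if tribWord (i'+4) = 0 then 1 else 0) := rfl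
          have u2 : cnt 0 i' 4 = cnt 0 i' 3 + (if tribWord (i'+3) = 0 then 1 else 0) := rfl
          have u3 : cnt 0 i' 3 = cnt 0 i' 2 + (if tribWord (i'+2) = 0 then 1 else 0) := rfl
          rw [hTi4] at u1
          rw [hTi2] at u3
          simp at u1 u3
          omega
        rw [hq2] at hst
        exact no_stretch3 hst hν
    · -- q ≥ 3 : three-level descent
      obtain ⟨r₀, ν₁, hbr₀, hst₁, hwin₁, hnulb₁, hqid₁, hoid₁, hlen₁, hcnt0₁, hcnt1₁⟩ :=
        package hq (by omega) ha' hs'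
      set q₂ := cnt 0 i' q with hq₂def
      have hq₂pos : 1 ≤ q₂ := cnt_pos (p := 0) (by omega) (by simpa using ha')
      -- ν₁ ≥ 2 q₂
      have hν₁ : 2*q₂ ≤ ν₁ := by
        have h1 : cnt 0 i' (q+q) = cnt 0 i' q + cnt 0 (i'+q) q := cnt_add _ _ _ _
        have h2 : cnt 0 (i'+q) q = cnt 0 i' q := by
          have := cnt_shift hs' 0 0 q (by omega)
          simpa using this
        have h3 : cnt 0 i' (q+q) ≤ cnt 0 i' (n'-1) := cnt_mono_t (by omega)
        omega
      -- extend level 2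
      obtain ⟨i₂, n₂, hi₂le, hi₂sum, hs₂, ha₂⟩ := stretch_extend r₀ hst₁ (by omega)
      have hn₂ : ν₁ ≤ n₂ := by omega
      have hsl₂ : ∀ l, cnt l r₀ q₂ = cnt l i₂ q₂ := by
        intro l
        have h := window_slide hs₂ l (r₀ - i₂) (by omega)
        rw [show i₂ + (r₀ - i₂) = r₀ by omega] at h
        exact h
      obtain ⟨r₁₀, ν₂, hbr₁, hst₂, hwin₂, hnulb₂, hqid₂, hoid₂, hlen₂, hcnt0₂, hcnt1₂⟩ :=
        package hq₂pos (by omega : q₂ + 1 ≤ n₂) ha₂ hs₂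
      set q₃ := cnt 0 i₂ q₂ with hq₃def
      have hq₃pos : 1 ≤ q₃ := by
        rw [hq₃def]
        exact cnt_pos (p := 0) (by omega) (by simpa using ha₂)
      have hq₂gt : q₃ + 1 ≤ q₂ := by
        rcases Nat.lt_or_ge q₃ q₂ with h|h
        · omega
        · exfalso
          have hle : q₃ ≤ q₂ := by rw [hq₃def]; exact cnt_le _ _ _
          have h0 : cnt 0 r₁₀ q₃ = 0 := by omega
          rcases Nat.lt_or_ge q₃ 2 with h2|h2
          · have hq₃1 : q₃ = 1 := by omega
            have hq₂1 : q₂ = 1 := by omega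
            have hco := cnt01_one r₀
            rw [hq₂1] at hqid₁
            omega
          · have hz0 : tribWord r₁₀ ≠ 0 := by
              intro hT
              have := cnt_pos (l := 0) (j := r₁₀) (p := 0) (t := q₃) (by omega) (by simpa using hT)
              omega
            have hz1 : tribWord (r₁₀+1) ≠ 0 := by
              intro hT
              have := cnt_pos (l := 0) (j := r₁₀) (p := 1) (t := q₃) (by omega) hT
              omega
            exact hz1 (P1 hz0)
      have hν₂ : q₃ + 1 ≤ ν₂ := by
        have h1 : (n₂ - 1 + 1)/2 ≤ cnt 0 i₂ (n₂ - 1) := cnt0_aligned ha₂ _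
        omega
      obtain ⟨i₃, n₃, hi₃le, hi₃sum, hs₃, ha₃⟩ := stretch_extend r₁₀ hst₂ hν₂
      have hn₃ : ν₂ ≤ n₃ := by omega
      have hsl₃ : ∀ l, cnt l r₁₀ q₃ = cnt l i₃ q₃ := by
        intro l
        have h := window_slide hs₃ l (r₁₀ - i₃) (by omega)
        rw [show i₃ + (r₁₀ - i₃) = r₁₀ by omega] at h
        exact h
      obtain ⟨r₂₀, ν₃, hbr₂, hst₃, hwin₃, hnulb₃, hqid₃, hoid₃, hlen₃, hcnt0₃, hcnt1₃⟩ :=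
        package hq₃pos (by omega : q₃ + 1 ≤ n₃) ha₃ hs₃
      set q₄ := cnt 0 i₃ q₃ with hq₄def
      set q₅ := cnt 0 r₂₀ q₄ with hq₅def
      set o₄ := cnt 1 r₂₀ q₄ with ho₄def
      have hq₄pos : 1 ≤ q₄ := by
        rw [hq₄def]
        exact cnt_pos (p := 0) (by omega) (by simpa using ha₃)
      have hq₄le : q₄ ≤ q₃ := by rw [hq₄def]; exact cnt_le _ _ _
      -- identities
      have E1 : cnt 0 r₀ q₂ = q₃ := by rw [hsl₂ 0, ← hq₃def]
      have E6 : cnt 1 r₁₀ q₃ = q₅ := by rw [hsl₃ 1, hoid₃]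
      have E5 : cnt 0 r₁₀ q₃ = q₄ := by rw [hsl₃ 0, ← hq₄def]
      have E4 : cnt 1 i₂ q₂ = q₄ := by rw [hoid₂, E5]
      have E2 : cnt 1 r₀ q₂ = q₄ := by rw [hsl₂ 1, E4]
      have I1 : q = q₂ + q₃ + q₄ := by rw [hqid₁, E1, E2]
      have I2 : q₂ = q₃ + q₄ + q₅ := by rw [hqid₂, E5, E6]
      have I3 : q₃ = q₄ + q₅ + o₄ := hqid₃
      -- IHs
      have IH2 := IH q₂ (by omega) i₂ n₂ hq₂pos hs₂
      have IH3 := IH q₃ (by omega) i₃ n₃ hq₃pos hs₃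
      have IH4 := IH q₄ (by omega) r₂₀ ν₃ hq₄pos hst₃
      -- length chain
      have c1 : cnt 0 r₀ ν₁ ≤ cnt 0 i₂ n₂ := cnt_contain (by omega) (by omega)
      have c2 : cnt 1 r₀ ν₁ ≤ cnt 1 i₂ n₂ := cnt_contain (by omega) (by omega)
      have c4 : cnt 0 r₁₀ ν₂ ≤ cnt 0 i₃ n₃ := cnt_contain (by omega) (by omega)
      have L1 : n' ≤ n₂ + n₃ + ν₃ + 3 := by omega
      -- final
      have T1 : cnt 1 i' q = q₃ := by rw [hoid₁, E1]
      rw [T1]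
      have E7 : cnt 0 i₂ q₂ = q₃ := hq₃def.symm
      have E8 : cnt 0 i₃ q₃ = q₄ := hq₄def.symm
      rw [E7] at IH2
      rw [E8] at IH3
      rw [← hq₅def, ← ho₄def] at IH4
      rw [E4] at IH2
      rw [hoid₃] at IH3
      omega
/-! ### Pinning: windows of long stretches are canonical -/

def canonS (q z o : ℕ) : Prop :=
  (q = 1 ∧ z = 1 ∧ o = 0) ∨ (q = 2 ∧ z = 1 ∧ o = 0) ∨
  (∃ m, 3 ≤ m ∧ q = trib m ∧ z = trib (m-1) ∧ o = trib (m-2)) ∨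
  (∃ m, 3 ≤ m ∧ q = trib m + trib (m-1) ∧ z = trib (m-1) + trib (m-2) ∧
    o = trib (m-2) + trib (m-3))

lemma trib_rec {m : ℕ} (h : 2 ≤ m) : trib (m+1) = trib m + trib (m-1) + trib (m-2) := by
  obtain ⟨k, rfl⟩ : ∃ k, m = k + 2 := ⟨m - 2, by omega⟩
  show trib (k+3) = _
  rw [trib]
  congr 2 <;> congr 1 <;> omega

lemma canonS_ascent {q z o : ℕ} (h : canonS q z o) : canonS (q + z + o) q z := by
  rcases h with ⟨h1,h2,h3⟩|⟨h1,h2,h3⟩|⟨m,hm,h1,h2,h3⟩|⟨m,hm,h1,h2,h3⟩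
  · right; right; left
    exact ⟨3, by omega, by subst h1 h2 h3; rfl, by subst h1 h2 h3; rfl, by subst h1 h2 h3; rfl⟩
  · right; right; right
    refine ⟨3, by omega, ?_, ?_, ?_⟩ <;> subst h1 <;> subst h2 <;> subst h3 <;> rfl
  · right; right; left
    refine ⟨m+1, by omega, ?_, ?_, ?_⟩
    · rw [trib_rec (by omega), h1, h2, h3]
    · rw [show m+1-1 = m by omega, h1]
    · rw [show m+1-2 = m-1 by omega, h2]
  · right; right; right
    refine ⟨m+1, by omega, ?_, ?_, ?_⟩
    · have r1 : trib (m+1) = trib m + trib (m-1) + trib (m-2) := trib_rec (by omega)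
      have r2 : trib m = trib (m-1) + trib (m-2) + trib (m-3) := by
        have := trib_rec (m := m-1) (by omega)
        rw [show m-1+1 = m by omega, show m-1-1 = m-2 by omega, show m-1-2 = m-3 by omega] at this
        exact this
      rw [show m+1-1 = m by omega, h1, h2, h3]
      omega
    · rw [show m+1-1 = m by omega, show m+1-2 = m-1 by omega, h1]
    · rw [show m+1-2 = m-1 by omega, show m+1-3 = m-2 by omega, h2]

theorem thmC : ∀ q i n, 1 ≤ q → tribWord i = 0 → StretchP i n q →
    2*q ≤ n + 1 → q + 1 ≤ n → canonS q (cnt 0 i q) (cnt 1 i q) := by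
  intro q
  induction q using Nat.strong_induction_on with
  | _ q IH =>
  intro i n hq ha hs h2q hn
  rcases Nat.lt_or_ge q 2 with hq1|hq2
  · -- q = 1
    have hq1' : q = 1 := by omega
    subst hq1'
    left
    refine ⟨rfl, ?_, ?_⟩
    · rw [cnt_one, ha]; simp
    · rw [cnt_one, ha]; simp
  · -- q ≥ 2
    obtain ⟨r₀, ν, hbr, hst, hwin, hnulb, hqid, hoid, hlen, hc0, hc1⟩ :=
      package (by omega) hn ha hs
    set q₂ := cnt 0 i q with hq₂def
    have hq₂pos : 1 ≤ q₂ := by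
      rw [hq₂def]
      exact cnt_pos (p := 0) (by omega) (by simpa using ha)
    rcases Nat.lt_or_ge ν (q₂ + 1) with hν1|hν2
    ·
      -- and for q₂ ≥ 2, ν = q₂ ≤ 2q₂ - 2 gives the contradiction below. Unify: case ν ≤ 2q₂-2
      -- here: if q₂ = 1 then ν = 1 : direct case
      have hνq₂ : ν = q₂ := by omega
      rcases Nat.lt_or_ge q₂ 2 with hq₂1|hq₂2
      · -- q₂ = 1, ν = 1
        have e1 : q₂ = 1 := by omega
        have hT3 := tribWord_lt_three r₀
        have e2 : cnt 0 r₀ 1 = if tribWord r₀ = 0 then 1 else 0 := cnt_one _ _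
        have e3 : cnt 1 r₀ 1 = if tribWord r₀ = 1 then 1 else 0 := cnt_one _ _
        rw [e1] at hqid hoid
        by_cases hT0 : tribWord r₀ = 0
        · have hq2' : q = 2 := by rw [hqid, e2, e3]; simp [hT0]
          right; right; left
          refine ⟨3, by omega, by rw [hq2']; rfl, ?_, ?_⟩
          · have ht : trib (3-1) = 1 := rfl
            omega
          · rw [hoid, e2, show trib (3-2) = 1 from rfl]
            simp [hT0]
        · by_cases hT1 : tribWord r₀ = 1
          · have hq2' : q = 2 := by rw [hqid, e2, e3]; simp [hT0, hT1]
            right; left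
            refine ⟨hq2', by omega, ?_⟩
            rw [hoid, e2]; simp [hT0]
          · -- letter 2 : q = 1, contradiction
            exfalso
            have : q = 1 := by rw [hqid, e2, e3]; simp [hT0, hT1]
            omega
      · -- q₂ ≥ 2 and ν = q₂ ≤ 2q₂ - 2 : contradiction (handled by generic argument below)
        exfalso
        -- suffix argument with t := ν - q₂ = 0, m := q₂ ≥ 2
        -- cnt l r₀ ν = cnt l r₀ q₂ - suffix... here ν = q₂ exactly:
        -- n ≤ ν + (q - q₂) + 1 = q₂ + q - q₂ + 1 = q + 1, but n ≥ 2q-1 ≥ q+2 for q ≥ 3.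
        -- for q = 2, q₂ ≥ 2 impossible? q = q₂ + ... ≥ q₂ + 1 (shown below) so q₂ < q = 2, contra.
        have hsum : cnt 0 r₀ ν + cnt 1 r₀ ν = q - q₂ := by
          rw [hνq₂]; omega
        have hn' : n ≤ q + 1 := by omega
        -- need q ≥ 3 : since q₂ ≥ 2 and q > q₂ is not yet established... 
        -- q = q₂ + cnt 0 r₀ q₂ + cnt 1 r₀ q₂ ≥ q₂ ≥ 2. If q = 2 then q₂ = 2 and counts 0:
        -- window "xx" with no 0/1 letters: both letters 2, P1 contra.
        rcases Nat.lt_or_ge q 3 with hq3|hq3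
        · have hq2' : q = 2 := by omega
          have hc00 : cnt 0 r₀ q₂ = 0 := by omega
          have hz0 : tribWord r₀ ≠ 0 := by
            intro hT
            have := cnt_pos (l := 0) (j := r₀) (p := 0) (t := q₂) (by omega) (by simpa using hT)
            omega
          have hz1 : tribWord (r₀+1) ≠ 0 := by
            intro hT
            have := cnt_pos (l := 0) (j := r₀) (p := 1) (t := q₂) (by omega) hT
            omega
          exact hz1 (P1 hz0)
        · omega
    · -- ν ≥ q₂ + 1 : check whether ν ≥ 2q₂ - 1
      rcases Nat.lt_or_ge (ν + 1) (2*q₂) with hνsmall|hνbig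
      · -- q₂ + 1 ≤ ν ≤ 2q₂ - 2 : contradiction via suffix count
        exfalso
        set t := ν - q₂ with htdef
        set m := 2*q₂ - ν with hmdef
        have hm2 : 2 ≤ m := by omega
        have htm : t + m = q₂ := by omega
        have hd1 : ∀ l, cnt l r₀ ν = cnt l r₀ q₂ + cnt l r₀ t := by
          intro l
          have e1 : cnt l r₀ (q₂ + t) = cnt l r₀ q₂ + cnt l (r₀ + q₂) t := cnt_add _ _ _ _
          have e2 : cnt l (r₀ + q₂) t = cnt l r₀ t := by
            have := cnt_shift hst l 0 t (by omega)
            simpa using this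
          rw [show ν = q₂ + t by omega, e1, e2]
        have hd2 : ∀ l, cnt l r₀ q₂ = cnt l r₀ t + cnt l (r₀ + t) m := by
          intro l
          rw [← htm, cnt_add]
        have hsfx : m / 2 ≤ cnt 0 (r₀ + t) m := cnt0_half _ _
        have k0 := hd1 0
        have k1 := hd1 1
        have j0 := hd2 0
        have j1 := hd2 1
        omega
      · -- ν ≥ 2q₂ - 1 and ν ≥ q₂+1 : extend, IH, ascend
        obtain ⟨i₂, n₂, hi₂le, hi₂sum, hs₂, ha₂⟩ := stretch_extend r₀ hst hν2
        have hn₂ : ν ≤ n₂ := by omega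
        have hsl : ∀ l, cnt l r₀ q₂ = cnt l i₂ q₂ := by
          intro l
          have h := window_slide hs₂ l (r₀ - i₂) (by omega)
          rw [show i₂ + (r₀ - i₂) = r₀ by omega] at h
          exact h
        have hz₂pos : 1 ≤ cnt 0 i₂ q₂ :=
          cnt_pos (p := 0) (by omega) (by simpa using ha₂)
        have hq₂lt : q₂ < q := by
          have := hsl 0
          omega
        have ihc := IH q₂ hq₂lt i₂ n₂ hq₂pos ha₂ hs₂ (by omega) (by omega)
        have hasc := canonS_ascent ihc
        have hqeq : q₂ + cnt 0 i₂ q₂ + cnt 1 i₂ q₂ = q := by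
          rw [← hsl 0, ← hsl 1]
          omega
        rw [hqeq] at hasc
        have hfin : cnt 1 i q = cnt 0 i₂ q₂ := by rw [hoid, hsl 0]
        rw [hfin]
        exact hasc
/-! ### Tribonacci number facts -/

lemma trib_pos : ∀ m, 1 ≤ m → 1 ≤ trib m := by
  intro m
  induction m using Nat.strong_induction_on with
  | _ m IH =>
    match m with
    | 0 => intro h; omega
    | 1 => intro _; exact le_refl _
    | 2 => intro _; exact le_refl _
    | (k+3) =>
        intro _
        have := IH (k+2) (by omega) (by omega)
        show 1 ≤ trib (k+2) + trib (k+1) + trib k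
        omega

lemma trib_lt_succ {m : ℕ} (h : 2 ≤ m) : trib m < trib (m+1) := by
  rw [trib_rec h]
  have := trib_pos (m-1) (by omega)
  omega

lemma trib_mono {a b : ℕ} (ha : 2 ≤ a) (hab : a < b) : trib a < trib b := by
  induction b with
  | zero => omega
  | succ b ih =>
      rcases Nat.lt_or_ge a b with h|h
      · have := ih h
        have h2 : trib b < trib (b+1) := trib_lt_succ (by omega)
        omega
      · have : a = b := by omega
        subst this
        exact trib_lt_succ ha

lemma trib_mono_le {a b : ℕ} (ha : 2 ≤ a) (hab : a ≤ b) : trib a ≤ trib b := by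
  rcases Nat.eq_or_lt_of_le hab with h|h
  · subst h; exact le_refl _
  · exact le_of_lt (trib_mono ha h)

lemma canonS_bound {j z o : ℕ} (hj : 3 ≤ j) (h : canonS (trib j) z o) :
    2*z + o ≤ 2 * trib (j-1) + trib (j-2) := by
  have hj2 : (2:ℕ) ≤ trib j := by
    calc (2:ℕ) = trib 3 := rfl
      _ ≤ trib j := trib_mono_le (by omega) hj
  rcases h with ⟨h1,h2,h3⟩|⟨h1,h2,h3⟩|⟨m,hm,h1,h2,h3⟩|⟨m,hm,h1,h2,h3⟩
  · omega
  · -- trib j = 2 ⇒ j = 3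
    have hj3 : j = 3 := by
      by_contra hne
      have : (4:ℕ) ≤ trib j := by
        calc (4:ℕ) = trib 4 := rfl
          _ ≤ trib j := trib_mono_le (by omega) (by omega)
      omega
    subst hj3
    have e1 : trib (3-1) = 1 := rfl
    have e2 : trib (3-2) = 1 := rfl
    omega
  · -- first family : m = j
    have hmj : m = j := by
      by_contra hne
      rcases Nat.lt_or_ge m j with hc|hc
      · have := trib_mono (a := m) (by omega) hc
        omega
      · have := trib_mono (a := j) (b := m) (by omega) (by omega)
        omega
    subst hmj
    omega
  · -- second family : impossible
    exfalso
    have hp1 : 1 ≤ trib (m-1) := trib_pos _ (by omega)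
    have hp2 : 1 ≤ trib (m-2) := trib_pos _ (by omega)
    have hr : trib (m+1) = trib m + trib (m-1) + trib (m-2) := trib_rec (by omega)
    rcases Nat.lt_or_ge j (m+1) with hc|hc
    · -- j ≤ m : trib j ≤ trib m < trib m + trib (m-1)
      have : trib j ≤ trib m := trib_mono_le (by omega) (by omega)
      omega
    · have : trib (m+1) ≤ trib j := trib_mono_le (by omega) hc
      omega
/-! ### Existence : the extremal words -/

def Wlist : ℕ → List ℕ
  | 0 => [0,0]
  | k+1 => (Wlist k).flatMap tribMap ++ [0]

def Xlist : ℕ → List ℕ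
  | 0 => [0]
  | k+1 => (Xlist k).flatMap tribMap

lemma tribMap_vals0 : tribMap 0 = [0,1] := rfl
lemma tribMap_vals1 : tribMap 1 = [0,2] := rfl

lemma flat_stats : ∀ w : List ℕ, (w.flatMap tribMap).length = w.length + w.count 0 + w.count 1
    ∧ (w.flatMap tribMap).count 0 = w.length ∧ (w.flatMap tribMap).count 1 = w.count 0 := by
  intro w
  induction w with
  | nil => simp
  | cons c w ih =>
      obtain ⟨ih1, ih2, ih3⟩ := ih
      have e1 : (c :: w).count 0 = w.count 0 + (if c = 0 then 1 else 0) := by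
        rw [List.count_cons]
        by_cases h : c = 0 <;> simp [h]
      have e2 : (c :: w).count 1 = w.count 1 + (if c = 1 then 1 else 0) := by
        rw [List.count_cons]
        by_cases h : c = 1 <;> simp [h]
      have e3 : ((c :: w).flatMap tribMap) = tribMap c ++ w.flatMap tribMap := rfl
      rw [e3]
      by_cases h0 : c = 0
      · subst h0
        rw [tribMap_vals0]
        refine ⟨?_, ?_, ?_⟩
        · simp only [List.length_append, List.length_cons, ih1, e1, e2]
          simp
          omega
        · rw [List.count_append, ih2]
          simp; omega
        · rw [List.count_append, ih3, e1]
          simp; omega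
      · by_cases h1 : c = 1
        · subst h1
          rw [tribMap_vals1]
          refine ⟨?_, ?_, ?_⟩
          · simp only [List.length_append, List.length_cons, ih1, e1, e2]
            simp
            omega
          · rw [List.count_append, ih2]
            simp; omega
          · rw [List.count_append, ih3, e1]
            simp
        · have ht : tribMap c = [0] := by simp [tribMap, h0, h1]
          rw [ht]
          refine ⟨?_, ?_, ?_⟩
          · simp only [List.length_append, List.length_cons, ih1, e1, e2]
            simp [h0, h1]
            omega
          · rw [List.count_append, ih2]
            simp; omega
          · rw [List.count_append, ih3, e1]
            simp [h0]

lemma Xstats : ∀ k, (Xlist k).length = trib (k+2) ∧ (Xlist k).count 0 = trib (k+1) ∧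
    (Xlist k).count 1 = trib k := by
  intro k
  induction k with
  | zero => refine ⟨rfl, rfl, rfl⟩
  | succ k ih =>
      obtain ⟨ih1, ih2, ih3⟩ := ih
      obtain ⟨f1, f2, f3⟩ := flat_stats (Xlist k)
      refine ⟨?_, ?_, ?_⟩
      · show ((Xlist k).flatMap tribMap).length = trib (k+3)
        rw [f1, ih1, ih2, ih3]
        show _ = trib (k+2) + trib (k+1) + trib k
        rfl
      · show ((Xlist k).flatMap tribMap).count 0 = _
        rw [f2, ih1]
      · show ((Xlist k).flatMap tribMap).count 1 = _
        rw [f3, ih2]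

lemma flat_cons_zero {t : List ℕ} (h : t ≠ []) : ∃ t', t.flatMap tribMap = 0 :: t' := by
  rcases t with _|⟨c, t⟩
  · exact absurd rfl h
  · simp only [List.flatMap_cons]
    by_cases h0 : c = 0
    · subst h0
      rw [tribMap_vals0]
      exact ⟨[1] ++ t.flatMap tribMap, by simp⟩
    · by_cases h1 : c = 1
      · subst h1
        rw [tribMap_vals1]
        exact ⟨[2] ++ t.flatMap tribMap, by simp⟩
      · have ht : tribMap c = [0] := by simp [tribMap, h0, h1]
        rw [ht]
        exact ⟨t.flatMap tribMap, by simp⟩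

lemma Wmain : ∀ k, (Wlist k).take (trib (k+2)) = Xlist k ∧
    (Wlist k).drop (trib (k+2)) <+: Wlist k ∧
    trib (k+2) + 1 ≤ (Wlist k).length := by
  intro k
  induction k with
  | zero =>
      refine ⟨rfl, ?_, by decide⟩
      show [0] <+: [0,0]
      exact ⟨[0], rfl⟩
  | succ k ih =>
      obtain ⟨ih1, ih2, ih3⟩ := ih
      obtain ⟨x1, x2, x3⟩ := Xstats k
      obtain ⟨fx1, _, _⟩ := flat_stats (Xlist k)
      have hXlen : ((Xlist k).flatMap tribMap).length = trib (k+3) := by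
        rw [fx1, x1, x2, x3]; rfl
      have hdecomp : Wlist (k+1) = (Xlist k).flatMap tribMap
          ++ (((Wlist k).drop (trib (k+2))).flatMap tribMap ++ [0]) := by
        show (Wlist k).flatMap tribMap ++ [0] = _
        conv_lhs => rw [← List.take_append_drop (trib (k+2)) (Wlist k)]
        rw [List.flatMap_append, ih1, List.append_assoc]
      refine ⟨?_, ?_, ?_⟩
      · rw [hdecomp, ← hXlen, List.take_left]
        rfl
      · obtain ⟨t, ht⟩ := ih2
        have htne : t ≠ [] := by
          intro hcon
          rw [hcon, List.append_nil] at ht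
          have := congrArg List.length ht
          rw [List.length_drop] at this
          have hp := trib_pos (k+2) (by omega)
          omega
        obtain ⟨t', ht'⟩ := flat_cons_zero htne
        rw [hdecomp, ← hXlen, List.drop_left]
        refine ⟨t' ++ [0], ?_⟩
        have e2 : ((Wlist k).drop (trib (k+2))).flatMap tribMap ++ [0] ++ (t' ++ [0])
            = (Wlist k).flatMap tribMap ++ [0] := by
          conv_rhs => rw [← ht]
          rw [List.flatMap_append, ht']
          simp
        rw [e2, ← hdecomp]
        rfl
      · rw [hdecomp]
        simp only [List.length_append, hXlen, List.length_cons, List.length_nil]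
        have e9 : trib (k+1+2) = trib (k+3) := rfl
        omega

lemma Warith : ∀ k, 2 * (Wlist k).length + 3 = 5 * trib (k+2) + 2 * trib (k+1) + trib k := by
  have hrec : ∀ k, (Wlist (k+1)).length = (Wlist k).length + (Wlist k).count 0 + (Wlist k).count 1 + 1 := by
    intro k
    show ((Wlist k).flatMap tribMap ++ [0]).length = _
    rw [List.length_append, (flat_stats (Wlist k)).1]
    simp
  have hc0 : ∀ k, (Wlist (k+1)).count 0 = (Wlist k).length + 1 := by
    intro k
    show ((Wlist k).flatMap tribMap ++ [0]).count 0 = _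
    rw [List.count_append, (flat_stats (Wlist k)).2.1]
    simp
  have hc1 : ∀ k, (Wlist (k+1)).count 1 = (Wlist k).count 0 := by
    intro k
    show ((Wlist k).flatMap tribMap ++ [0]).count 1 = _
    rw [List.count_append, (flat_stats (Wlist k)).2.2]
    simp
  intro k
  induction k using Nat.strong_induction_on with
  | _ k IH =>
    match k with
    | 0 => rfl
    | 1 => rfl
    | 2 => rfl
    | (k+3) =>
        have i0 := IH k (by omega)
        have i1 := IH (k+1) (by omega)
        have i2 := IH (k+2) (by omega)
        have r1 := hrec (k+2)
        have r2 := hc0 (k+1)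
        have r3 := hc1 (k+2)
        have r4 := hc0 k
        have r5 := hc1 (k+1)
        have r6 := hrec (k+1)
        have r7 := hrec k
        have b1 : Wlist (k+2+1) = Wlist (k+3) := rfl
        have b2 : Wlist (k+1+1) = Wlist (k+2) := rfl
        have n1 : trib (k+1+2) = trib (k+3) := rfl
        have n2 : trib (k+1+1) = trib (k+2) := rfl
        have n3 : trib (k+2+2) = trib (k+4) := rfl
        have n4 : trib (k+2+1) = trib (k+3) := rfl
        rw [b1] at r1 r3
        rw [b2] at r2 r5 r6
        rw [n1, n2] at i1
        rw [n3, n4] at i2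
        have t5 : trib (k+5) = trib (k+4) + trib (k+3) + trib (k+2) := rfl
        have t4 : trib (k+4) = trib (k+3) + trib (k+2) + trib (k+1) := rfl
        have t3 : trib (k+3) = trib (k+2) + trib (k+1) + trib k := rfl
        show 2 * (Wlist (k+3)).length + 3 = 5 * trib (k+5) + 2 * trib (k+4) + trib (k+3)
        omega

lemma Winfix : ∀ k, ∃ u v, tribIter (3*k+4) = u ++ Wlist k ++ v := by
  intro k
  induction k with
  | zero =>
      refine ⟨[0,1,0,2,0,1], [1,0,2,0,1], ?_⟩
      decide
  | succ k ih =>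
      obtain ⟨u, v, h⟩ := ih
      obtain ⟨ext, hext⟩ := tribIter_prefix (show 3*k+4 ≤ 3*k+6 by omega)
      have hvext : v ++ ext ≠ [] := by
        intro hcon
        have h1 := tribIter_length_lt (3*k+4)
        have h2 := tribIter_length_lt (3*k+5)
        rcases List.append_eq_nil_iff.mp hcon with ⟨h3, h4⟩
        subst h3 h4
        simp at hext
        rw [show 3*k+4+1 = 3*k+5 by rfl] at h1
        rw [show 3*k+5+1 = 3*k+6 by rfl] at h2
        rw [hext] at h1
        omega
      obtain ⟨t', ht'⟩ := flat_cons_zero hvext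
      refine ⟨u.flatMap tribMap, t', ?_⟩
      have e0 : tribIter (3*(k+1)+4) = (tribIter (3*k+6)).flatMap tribMap := by
        show tribIter (3*k+7) = _
        rfl
      rw [e0, ← hext, h]
      rw [show (u ++ Wlist k ++ v) ++ ext = u ++ (Wlist k ++ (v ++ ext)) by simp,
        List.flatMap_append, List.flatMap_append, ht']
      show _ = u.flatMap tribMap ++ ((Wlist k).flatMap tribMap ++ [0]) ++ t'
      simp

lemma getD_drop' (l : List ℕ) (m s : ℕ) : (l.drop m).getD s 0 = l.getD (m+s) 0 := by
  simp [List.getD_eq_getElem?_getD, List.getElem?_drop]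

lemma W_period : ∀ k s, s + trib (k+2) < (Wlist k).length →
    (Wlist k).getD s 0 = (Wlist k).getD (s + trib (k+2)) 0 := by
  intro k s hs
  obtain ⟨h1, h2, h3⟩ := Wmain k
  obtain ⟨t, ht⟩ := h2
  have e1 : (Wlist k).getD (s + trib (k+2)) 0 = ((Wlist k).drop (trib (k+2))).getD s 0 := by
    rw [getD_drop']
    congr 1
    omega
  have hpre : (List.drop (trib (k+2)) (Wlist k)).getD s 0
      = ((List.drop (trib (k+2)) (Wlist k)) ++ t).getD s 0 :=
    (List.getD_append _ _ _ _ (by rw [List.length_drop]; omega)).symm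
  rw [e1, hpre, ht]

lemma W_stretch : ∀ k, ∃ i, StretchP i ((Wlist k).length) (trib (k+2)) := by
  intro k
  obtain ⟨u, v, h⟩ := Winfix k
  refine ⟨u.length, ?_⟩
  intro s hs
  have heval : ∀ m, m < (Wlist k).length → tribWord (u.length + m) = (Wlist k).getD m 0 := by
    intro m hm
    have hlen : u.length + m < (tribIter (3*k+4)).length := by
      rw [h]; simp; omega
    rw [tribWord_eval hlen, h, List.append_assoc,
      List.getD_append_right _ _ _ _ (by omega), Nat.add_sub_cancel_left,
      List.getD_append _ _ _ _ hm]
  have h2 := heval (s + trib (k+2)) (by omega)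
  rw [show u.length + (s + trib (k+2)) = u.length + s + trib (k+2) by omega] at h2
  rw [heval s (by omega), h2]
  exact W_period k s hs
/-! ### Main theorem -/


/-- For `j ≥ 2`, the maximum length `U_j` of a factor of the Tribonacci word with
period `T_j` satisfies `2U_j = 5T_j + 2T_{j-1} + T_{j-2} - 3`. -/
theorem tribWord_max_length_with_period (j : ℕ) (hj : 2 ≤ j) :
    ∃ U : ℕ,
      IsGreatest {n : ℕ | ∃ i, ∀ k, k + trib j < n → tribWord (i + k) = tribWord (i + k + trib j)} U ∧
      2 * U + 3 = 5 * trib j + 2 * trib (j-1) + trib (j-2) := by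
  obtain ⟨k, rfl⟩ : ∃ k, j = k + 2 := ⟨j - 2, by omega⟩
  have e1 : trib (k+2-1) = trib (k+1) := rfl
  have e2 : trib (k+2-2) = trib k := rfl
  have harith := Warith k
  refine ⟨(Wlist k).length, ⟨?_, ?_⟩, ?_⟩
  · simp only [Set.mem_setOf_eq]
    obtain ⟨i₀, hst⟩ := W_stretch k
    exact ⟨i₀, fun k' hk' => hst k' hk'⟩
  · intro n hn
    simp only [Set.mem_setOf_eq] at hn
    obtain ⟨i, hstr⟩ := hn
    have hs : StretchP i n (trib (k+2)) := hstr
    have hq1 : 1 ≤ trib (k+2) := trib_pos _ (by omega)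
    show n ≤ (Wlist k).length
    rcases Nat.lt_or_ge n (trib (k+2) + 1) with hc|hc
    · omega
    · obtain ⟨i', n', hle, hsum, hs', ha'⟩ := stretch_extend i hs hc
      have hA := thmA (trib (k+2)) i' n' hq1 hs'
      rcases Nat.lt_or_ge k 1 with hk0|hk1
      · have hk0' : k = 0 := by omega
        subst hk0'
        have v2 : trib 2 = 1 := rfl
        have v1 : trib 1 = 1 := rfl
        have v0 : trib 0 = 0 := rfl
        have v1' : trib (0+1) = 1 := rfl
        have vq : trib (0+2) = 1 := rfl
        have ez : cnt 0 i' (trib (0+2)) = 1 := by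
          rw [vq, cnt_one, ha']; simp
        have eo : cnt 1 i' (trib (0+2)) = 0 := by
          rw [vq, cnt_one, ha']; simp
        omega
      · rcases Nat.lt_or_ge (n' + 1) (2 * trib (k+2)) with hsm|hbg
        · omega
        · have hC := thmC (trib (k+2)) i' n' hq1 ha' hs' (by omega) (by omega)
          have hB := canonS_bound (j := k+2) (by omega) hC
          rw [e1, e2] at hB
          omega
  · rw [e1, e2]
    omega
end

section
/- The sequence U_j defined by U_2 = 2, U_3 = 5, U_4 = [1100]_T, and satisfying U_j = U_{j-1} + U_{j-2} + U_{j-3} + 3 for j ≥ 5, satisfies the closed form 2U_j = 5T_j + 2T_{j-1} + T_{j-2} - 3 for all j ≥ 2. -/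
/-- The sequence `U_j` with `U_2 = 2`, `U_3 = 5`, `U_4 = 11 = [1100]_T` and
`U_j = U_{j-1} + U_{j-2} + U_{j-3} + 3` for `j ≥ 5`. -/
def Useq : ℕ → ℕ
  | 0 => 0
  | 1 => 0
  | 2 => 2
  | 3 => 5
  | 4 => 11
  | j+5 => Useq (j+4) + Useq (j+3) + Useq (j+2) + 3

/-- Closed form: `2U_j = 5T_j + 2T_{j-1} + T_{j-2} - 3` for `j ≥ 2`. -/
theorem Useq_closed_form (j : ℕ) (hj : 2 ≤ j) :
    2 * Useq j + 3 = 5 * trib j + 2 * trib (j-1) + trib (j-2) := by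
  induction j using Nat.strong_induction_on with
  | _ j ih =>
    match j, hj with
    | 2, _ => decide
    | 3, _ => decide
    | 4, _ => decide
    | (j+5), _ =>
      have h2 := ih (j+2) (by omega) (by omega)
      have h3 := ih (j+3) (by omega) (by omega)
      have h4 := ih (j+4) (by omega) (by omega)
      simp only [Nat.add_sub_cancel, show j+3-1 = j+2 by omega, show j+3-2 = j+1 by omega,
        show j+4-1 = j+3 by omega, show j+4-2 = j+2 by omega, show j+2-1 = j+1 by omega,
        show j+2-2 = j by omega, show j+5-1 = j+4 by omega, show j+5-2 = j+3 by omega] at *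
      have e1 : trib (j+5) = trib (j+4) + trib (j+3) + trib (j+2) := rfl
      have e2 : trib (j+4) = trib (j+3) + trib (j+2) + trib (j+1) := rfl
      have e3 : trib (j+3) = trib (j+2) + trib (j+1) + trib j := rfl
      have e4 : Useq (j+5) = Useq (j+4) + Useq (j+3) + Useq (j+2) + 3 := rfl
      omega
end

section
/- Let n ≥ 0 have Tribonacci representation e_1 e_2 ⋯ e_j (possibly with leading zeros) with j ≥ 3, meaning n = Σ_{1 ≤ i ≤ j} e_i T_{j+2-i} with e_i ∈ {0,1} and no three consecutive e's equal to 1. Then the number of 0's in the prefix T[0..n-1] of the Tribonacci word equals [e_1 ⋯ e_{j-1}]_T + e_j, the number of 1's equals [e_1 ⋯ e_{j-2}]_T + e_{j-1}, and the number of 2's equals [e_1 ⋯ e_{j-3}]_T + e_{j-2}. -/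
namespace TribAux

def P (m : ℕ) : List ℕ := (List.range m).map tribWord

lemma prefix_succ (k : ℕ) : tribIter k <+: tribIter (k+1) := by
  induction k with
  | zero => decide
  | succ k ih =>
    obtain ⟨t, ht⟩ := ih
    have key : tribIter (k+2) = tribIter (k+1) ++ t.flatMap tribMap := by
      show (tribIter (k+1)).flatMap tribMap = _
      conv_lhs => rw [← ht]
      rw [List.flatMap_append]
      rfl
    exact ⟨_, key.symm⟩

lemma prefix_le {k K : ℕ} (h : k ≤ K) : tribIter k <+: tribIter K := by
  induction K with
  | zero => simp [Nat.le_zero.mp h]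
  | succ K ih =>
    rcases Nat.lt_or_ge k (K+1) with h' | h'
    · exact (ih (Nat.lt_succ_iff.mp h')).trans (prefix_succ K)
    · have : k = K+1 := le_antisymm h h'
      simp [this]

lemma length_flatMap_ge (w : List ℕ) : w.length ≤ (w.flatMap tribMap).length := by
  induction w with
  | nil => simp
  | cons c w ih =>
    have : 1 ≤ (tribMap c).length := by
      unfold tribMap; split <;> [simp; skip]; split <;> simp
    simp only [List.flatMap_cons, List.length_append, List.length_cons]
    omega

lemma length_ge (k : ℕ) : k + 1 ≤ (tribIter k).length := by
  induction k with
  | zero => simp [tribIter]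
  | succ k ih =>
    obtain ⟨t, ht⟩ := prefix_le (Nat.zero_le k)
    have htl : k ≤ t.length := by
      have := congrArg List.length ht
      simp [tribIter] at this
      omega
    have h2 : tribIter (k+1) = [0,1] ++ t.flatMap tribMap := by
      show (tribIter k).flatMap tribMap = _
      rw [← ht]; rfl
    rw [h2]
    have := length_flatMap_ge t
    simp only [List.length_append, List.length_cons, List.length_nil]
    omega

lemma getD_stable {K m : ℕ} (h : m < (tribIter K).length) :
    (tribIter K).getD m 0 = tribWord m := by
  have key : ∀ {a b : ℕ}, a ≤ b → m < (tribIter a).length →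
      (tribIter a).getD m 0 = (tribIter b).getD m 0 := by
    intro a b hab hm
    obtain ⟨t, ht⟩ := prefix_le hab
    rw [← ht, List.getD_append _ _ _ _ hm]
  rcases Nat.le_total K (m+1) with h' | h'
  · exact key h' h
  · exact (key h' (by have := length_ge (m+1); omega)).symm

@[simp] lemma length_P (m : ℕ) : (P m).length = m := by simp [P]

lemma P_prefix {m K : ℕ} (h : m ≤ (tribIter K).length) : P m <+: tribIter K := by
  rw [List.prefix_iff_eq_take]
  apply List.ext_getElem (by simp [h])
  intro i h1 h2
  simp only [P, List.getElem_map, List.getElem_range, List.getElem_take]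
  have hi : i < (tribIter K).length := by simp at h1; omega
  rw [← getD_stable hi, List.getD_eq_getElem _ _ hi]

lemma P_succ (m : ℕ) : P (m+1) = P m ++ [tribWord m] := by
  simp [P, List.range_succ]

lemma length_flatMap (w : List ℕ) :
    (w.flatMap tribMap).length = w.length + w.count 0 + w.count 1 := by
  induction w with
  | nil => simp
  | cons c w ih =>
    simp only [List.flatMap_cons, List.length_append, List.length_cons, ih,
      List.count_cons]
    unfold tribMap
    rcases eq_or_ne c 0 with rfl | h0
    · simp; omega
    · rcases eq_or_ne c 1 with rfl | h1
      · simp; omega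
      · simp [h0, h1, Ne.symm h0, Ne.symm h1]; omega

lemma count0_flatMap (w : List ℕ) : (w.flatMap tribMap).count 0 = w.length := by
  induction w with
  | nil => simp
  | cons c w ih =>
    simp only [List.flatMap_cons, List.count_append, ih, List.length_cons]
    unfold tribMap
    split
    · simp; omega
    · split <;> simp <;> omega

lemma count1_flatMap (w : List ℕ) : (w.flatMap tribMap).count 1 = w.count 0 := by
  induction w with
  | nil => simp
  | cons c w ih =>
    simp only [List.flatMap_cons, List.count_append, ih, List.count_cons]
    unfold tribMap
    rcases eq_or_ne c 0 with rfl | h0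
    · simp; omega
    · rcases eq_or_ne c 1 with rfl | h1
      · simp
      · simp [h0, h1, Ne.symm h0]

lemma count2_flatMap (w : List ℕ) : (w.flatMap tribMap).count 2 = w.count 1 := by
  induction w with
  | nil => simp
  | cons c w ih =>
    simp only [List.flatMap_cons, List.count_append, ih, List.count_cons]
    unfold tribMap
    rcases eq_or_ne c 0 with rfl | h0
    · simp
    · rcases eq_or_ne c 1 with rfl | h1
      · simp; omega
      · simp [h0, h1, Ne.symm h1]

/-- length of the image of the prefix of length m under the morphism -/
def slen (m : ℕ) : ℕ := m + (P m).count 0 + (P m).count 1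

lemma P_slen (m : ℕ) : P (slen m) = (P m).flatMap tribMap := by
  have h1 : P m <+: tribIter (slen m) := P_prefix (by have := length_ge (slen m); unfold slen at *; omega)
  obtain ⟨t, ht⟩ := h1
  have h2 : (P m).flatMap tribMap <+: tribIter (slen m + 1) := by
    refine ⟨t.flatMap tribMap, ?_⟩
    rw [← List.flatMap_append, ht]
    rfl
  have h3 : P (slen m) <+: tribIter (slen m + 1) :=
    P_prefix (by have := length_ge (slen m + 1); omega)
  have hl : (P (slen m)).length = ((P m).flatMap tribMap).length := by
    rw [length_flatMap, length_P, length_P]; rfl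
  rw [List.prefix_iff_eq_take] at h2 h3
  rw [h3, h2, hl]

lemma P_getD {i N : ℕ} (h : i < N) : (P N).getD i 0 = tribWord i := by
  rw [List.getD_eq_getElem _ _ (by simpa using h)]
  simp [P]

lemma tribMap_getD (c : ℕ) : (tribMap c).getD 0 0 = 0 := by
  unfold tribMap; split; · rfl
  split <;> rfl

lemma slen_succ (m : ℕ) :
    slen (m+1) = slen m + (tribMap (tribWord m)).length ∧
    P (slen (m+1)) = P (slen m) ++ tribMap (tribWord m) := by
  have h : P (slen (m+1)) = P (slen m) ++ tribMap (tribWord m) := by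
    rw [P_slen, P_slen, P_succ, List.flatMap_append]
    simp
  constructor
  · have := congrArg List.length h
    simpa using this
  · exact h

lemma tribMap_len_pos (c : ℕ) : 1 ≤ (tribMap c).length := by
  unfold tribMap; split; · simp
  split <;> simp

lemma tribWord_slen (m : ℕ) : tribWord (slen m) = 0 := by
  obtain ⟨hl, hP⟩ := slen_succ m
  have hlt : slen m < slen (m+1) := by have := tribMap_len_pos (tribWord m); omega
  rw [← P_getD hlt, hP, List.getD_append_right _ _ _ _ (by simp)]
  simpa using tribMap_getD (tribWord m)

lemma counts_step (m b : ℕ) (hb : b ≤ 1) :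
    (P (slen m + b)).count 0 = m + b ∧
    (P (slen m + b)).count 1 = (P m).count 0 ∧
    (P (slen m + b)).count 2 = (P m).count 1 := by
  interval_cases b
  · simp [P_slen, count0_flatMap, count1_flatMap, count2_flatMap]
  · rw [show slen m + 1 = (slen m) + 1 from rfl, P_succ, tribWord_slen]
    simp [List.count_append, P_slen, count0_flatMap, count1_flatMap, count2_flatMap]

lemma peel (f : ℕ → ℕ) (b : ℕ) :
    ∑ i ∈ Finset.Icc 1 (b+1), f i = ∑ i ∈ Finset.Icc 1 b, f i + f (b+1) :=
  Finset.sum_Icc_succ_top (by omega) f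

lemma main : ∀ j, 3 ≤ j → ∀ e : ℕ → ℕ, (∀ i, 1 ≤ i → i ≤ j → e i ≤ 1) →
    (P (∑ i ∈ Finset.Icc 1 j, e i * trib (j + 2 - i))).count 0
        = (∑ i ∈ Finset.Icc 1 (j-1), e i * trib (j + 1 - i)) + e j ∧
    (P (∑ i ∈ Finset.Icc 1 j, e i * trib (j + 2 - i))).count 1
        = (∑ i ∈ Finset.Icc 1 (j-2), e i * trib (j - i)) + e (j-1) ∧
    (P (∑ i ∈ Finset.Icc 1 j, e i * trib (j + 2 - i))).count 2
        = (∑ i ∈ Finset.Icc 1 (j-3), e i * trib (j - 1 - i)) + e (j-2) := by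
  intro j hj
  induction j, hj using Nat.le_induction with
  | base =>
    intro e hbin
    have h1 := hbin 1 (by omega) (by omega)
    have h2 := hbin 2 (by omega) (by omega)
    have h3 := hbin 3 (by omega) (by omega)
    have E3 : ∀ f : ℕ → ℕ, ∑ i ∈ Finset.Icc 1 3, f i = f 1 + (f 2 + f 3) := by
      intro f
      rw [show Finset.Icc 1 3 = {1,2,3} from rfl, Finset.sum_insert (by decide),
        Finset.sum_insert (by decide), Finset.sum_singleton]
    have E2 : ∀ f : ℕ → ℕ, ∑ i ∈ Finset.Icc 1 2, f i = f 1 + f 2 := by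
      intro f
      rw [show Finset.Icc 1 2 = {1,2} from rfl, Finset.sum_pair (by decide)]
    have E1 : ∀ f : ℕ → ℕ, ∑ i ∈ Finset.Icc 1 1, f i = f 1 := by
      intro f
      rw [show Finset.Icc 1 1 = {1} from rfl, Finset.sum_singleton]
    have E0 : ∀ f : ℕ → ℕ, ∑ i ∈ Finset.Icc 1 0, f i = 0 := by
      intro f
      rw [show Finset.Icc 1 0 = (∅ : Finset ℕ) from rfl, Finset.sum_empty]
    simp only [show (3:ℕ)-1 = 2 from rfl, show (3:ℕ)-2 = 1 from rfl,
      show (3:ℕ)-3 = 0 from rfl, show (3:ℕ)+2 = 5 from rfl, show (3:ℕ)+1 = 4 from rfl]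
    rw [E3, E2, E1, E0]
    rcases Nat.le_one_iff_eq_zero_or_eq_one.mp h1 with h1 | h1 <;>
    rcases Nat.le_one_iff_eq_zero_or_eq_one.mp h2 with h2 | h2 <;>
    rcases Nat.le_one_iff_eq_zero_or_eq_one.mp h3 with h3 | h3 <;>
      rw [h1, h2, h3] <;> refine ⟨?_, ?_, ?_⟩ <;> decide
  | succ j hj ih =>
    intro e hbin
    obtain ⟨k, rfl⟩ : ∃ k, j = k + 3 := ⟨j - 3, by omega⟩
    obtain ⟨c0, c1, c2⟩ := ih e (fun i a b => hbin i a (by omega))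
    simp only [show k+3-1 = k+2 from by omega, show k+3-2 = k+1 from by omega,
      show k+3-3 = k from by omega, show k+3+2 = k+5 from by omega,
      show k+3+1 = k+4 from by omega] at c0 c1 c2
    simp only [show k+3+1 = k+4 from by omega, show k+4+2 = k+6 from by omega,
      show k+4+1 = k+5 from by omega, show k+4-1 = k+3 from by omega,
      show k+4-2 = k+2 from by omega, show k+4-3 = k+1 from by omega]
    set m := ∑ i ∈ Finset.Icc 1 (k+3), e i * trib (k+5-i) with hm
    -- the sum identity
    have p1 : ∑ i ∈ Finset.Icc 1 (k+4), e i * trib (k+6-i)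
        = ∑ i ∈ Finset.Icc 1 (k+1), e i * trib (k+6-i)
          + e (k+2) * trib (k+6-(k+2)) + e (k+3) * trib (k+6-(k+3))
          + e (k+4) * trib (k+6-(k+4)) := by
      rw [peel (fun i => e i * trib (k+6-i)) (k+3), peel (fun i => e i * trib (k+6-i)) (k+2),
        peel (fun i => e i * trib (k+6-i)) (k+1)]
    have p2 : m = ∑ i ∈ Finset.Icc 1 (k+1), e i * trib (k+5-i)
          + e (k+2) * trib (k+5-(k+2)) + e (k+3) * trib (k+5-(k+3)) := by
      rw [hm, peel (fun i => e i * trib (k+5-i)) (k+2), peel (fun i => e i * trib (k+5-i)) (k+1)]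
    have p3 : ∑ i ∈ Finset.Icc 1 (k+2), e i * trib (k+4-i)
        = ∑ i ∈ Finset.Icc 1 (k+1), e i * trib (k+4-i) + e (k+2) * trib (k+4-(k+2)) := by
      rw [peel (fun i => e i * trib (k+4-i)) (k+1)]
    have q1 : k+6-(k+2) = 4 := by omega
    have q2 : k+6-(k+3) = 3 := by omega
    have q3 : k+6-(k+4) = 2 := by omega
    have q4 : k+5-(k+2) = 3 := by omega
    have q5 : k+5-(k+3) = 2 := by omega
    have q6 : k+4-(k+2) = 2 := by omega
    rw [q1, q2, q3] at p1
    rw [q4, q5] at p2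
    rw [q6] at p3
    have psplit : ∑ i ∈ Finset.Icc 1 (k+1), e i * trib (k+6-i)
        = ∑ i ∈ Finset.Icc 1 (k+1), e i * trib (k+5-i)
          + ∑ i ∈ Finset.Icc 1 (k+1), e i * trib (k+4-i)
          + ∑ i ∈ Finset.Icc 1 (k+1), e i * trib (k+3-i) := by
      rw [← Finset.sum_add_distrib, ← Finset.sum_add_distrib]
      refine Finset.sum_congr rfl fun i hi => ?_
      simp only [Finset.mem_Icc] at hi
      have h6 : k+6-i = (k+3-i)+3 := by omega
      have h5 : k+5-i = (k+3-i)+2 := by omega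
      have h4 : k+4-i = (k+3-i)+1 := by omega
      rw [h6, h5, h4, show trib ((k+3-i)+3) = trib ((k+3-i)+2) + trib ((k+3-i)+1)
        + trib (k+3-i) from rfl]
      ring
    have key : ∑ i ∈ Finset.Icc 1 (k+4), e i * trib (k+6-i) = slen m + e (k+4) := by
      have hslen : slen m = m + (P m).count 0 + (P m).count 1 := rfl
      rw [hslen, c0, c1, p1, p2, p3, psplit,
        show trib 2 = 1 from rfl, show trib 3 = 2 from rfl, show trib 4 = 4 from rfl]
      ring
    rw [key]
    have hb : e (k+4) ≤ 1 := hbin (k+4) (by omega) (by omega)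
    obtain ⟨s0, s1, s2⟩ := counts_step m (e (k+4)) hb
    refine ⟨?_, ?_, ?_⟩
    · rw [s0]
    · rw [s1, c0]
    · rw [s2, c1]


end TribAux

/-- Counting letters in prefixes of the Tribonacci word from the Tribonacci
representation `e_1 e_2 ⋯ e_j` of `n` (possibly with leading zeros), `j ≥ 3`. -/
theorem tribWord_letter_counts (n j : ℕ) (hj : 3 ≤ j) (e : ℕ → ℕ)
    (hbin : ∀ i, 1 ≤ i → i ≤ j → e i ≤ 1)
    (hno111 : ∀ i, 1 ≤ i → i + 2 ≤ j → ¬ (e i = 1 ∧ e (i+1) = 1 ∧ e (i+2) = 1))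
    (hrep : n = ∑ i ∈ Finset.Icc 1 j, e i * trib (j + 2 - i)) :
    ((List.range n).map tribWord).count 0
        = (∑ i ∈ Finset.Icc 1 (j-1), e i * trib (j + 1 - i)) + e j ∧
    ((List.range n).map tribWord).count 1
        = (∑ i ∈ Finset.Icc 1 (j-2), e i * trib (j - i)) + e (j-1) ∧
    ((List.range n).map tribWord).count 2
        = (∑ i ∈ Finset.Icc 1 (j-3), e i * trib (j - 1 - i)) + e (j-2) := by
  rw [hrep]
  exact TribAux.main j hj e hbin
end
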